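/- arXiv:2412.19922 — 4 statements merged into one kernel-verified Lean document; each statement's English description precedes it below -/
import Mathlib

section
/- Suppose the kernels h_t (heat kernel) and k_t (Schrödinger kernel for L = -Δ + V, V ≥ 0 locally integrable) satisfy the Duhamel perturbation formula h_t(x-y) = k_t(x,y) + ∫₀^t ∫_{ℝ^d} h_{t-s}(x-z) V(z) k_s(z,y) dz ds, and 0 ≤ k_t(x,y) ≤ h_t(x-y). Then for every y ∈ ℝ^d, ∫_{ℝ^d} V(z) Γ(z,y) dz ≤ 1, where Γ(z,y) = ∫₀^∞ k_s(z,y) ds. -/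
open MeasureTheory Real Set ENNReal

/-- The Gaussian heat kernel on `ℝ^d`. -/
noncomputable def heatKernel (d : ℕ) (t : ℝ) (z : EuclideanSpace ℝ (Fin d)) : ℝ :=
  (4 * π * t) ^ (-(d : ℝ) / 2) * Real.exp (-‖z‖ ^ 2 / (4 * t))

lemma heatKernel_measurable (d : ℕ) :
    Measurable fun p : ℝ × EuclideanSpace ℝ (Fin d) => heatKernel d p.1 p.2 := by
  unfold heatKernel
  apply Measurable.mul
  · fun_prop
  · apply Real.measurable_exp.comp
    fun_prop

lemma integrable_gauss (d : ℕ) {b : ℝ} (hb : 0 < b) :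
    Integrable (fun v : EuclideanSpace ℝ (Fin d) => Real.exp (-b * ‖v‖ ^ 2)) := by
  have h := (GaussianFourier.integrable_cexp_neg_mul_sq_norm_add
    (b := ((b : ℝ) : ℂ)) (by simpa using hb) 0 (0 : EuclideanSpace ℝ (Fin d))).norm
  apply h.congr
  filter_upwards with v
  rw [Complex.norm_exp]
  congr 1
  simp [← Complex.ofReal_pow]

lemma lintegral_heatKernel (d : ℕ) {t : ℝ} (ht : 0 < t) (c : EuclideanSpace ℝ (Fin d)) :
    ∫⁻ x, ENNReal.ofReal (heatKernel d t (x - c)) = 1 := by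
  have h4 : (0:ℝ) < 4 * π * t := by positivity
  have hb : (0:ℝ) < 1 / (4 * t) := by positivity
  rw [lintegral_sub_right_eq_self (fun x => ENNReal.ofReal (heatKernel d t x)) c]
  have hnn : 0 ≤ᵐ[volume] fun x : EuclideanSpace ℝ (Fin d) => heatKernel d t x := by
    filter_upwards with x
    unfold heatKernel
    positivity
  have hint : Integrable (fun x : EuclideanSpace ℝ (Fin d) => heatKernel d t x) := by
    apply (((integrable_gauss d hb).const_mul ((4 * π * t) ^ (-(d : ℝ) / 2))).congr)
    filter_upwards with x
    unfold heatKernel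
    congr 1
    congr 1
    ring
  rw [← ofReal_integral_eq_lintegral_ofReal hint hnn]
  have hI : ∫ x : EuclideanSpace ℝ (Fin d), heatKernel d t x = 1 := by
    unfold heatKernel
    rw [MeasureTheory.integral_const_mul]
    have e1 : ∀ x : EuclideanSpace ℝ (Fin d),
        -‖x‖ ^ 2 / (4 * t) = -(1 / (4 * t)) * ‖x‖ ^ 2 := fun x => by ring
    simp_rw [e1]
    rw [GaussianFourier.integral_rexp_neg_mul_sq_norm hb, finrank_euclideanSpace_fin]
    have e2 : π / (1 / (4 * t)) = 4 * π * t := by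
      field_simp
    rw [e2, ← Real.rpow_add h4, show -(d:ℝ)/2 + (d:ℝ)/2 = 0 by ring, Real.rpow_zero]
  rw [hI, ENNReal.ofReal_one]

lemma lintegral_Ioi_le_one {G : ℝ → ℝ≥0∞} (hG : Measurable G)
    (h : ∀ t : ℝ, 0 < t → ∫⁻ s in Ioo (0:ℝ) t, G s ≤ 1) :
    ∫⁻ s in Ioi (0:ℝ), G s ≤ 1 := by
  have key : ∫⁻ s in Ioi (0:ℝ), G s
      = ⨆ n : ℕ, ∫⁻ s in Ioo (0:ℝ) ((n:ℝ) + 1), G s := by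
    rw [← lintegral_indicator measurableSet_Ioi]
    simp_rw [← lintegral_indicator measurableSet_Ioo]
    rw [← lintegral_iSup]
    · congr 1
      funext s
      by_cases hs : 0 < s
      · rw [Set.indicator_of_mem (mem_Ioi.mpr hs)]
        apply le_antisymm
        · obtain ⟨n, hn⟩ := exists_nat_gt s
          refine le_iSup_of_le n (le_of_eq ?_)
          rw [Set.indicator_of_mem (Set.mem_Ioo.mpr ⟨hs, by linarith⟩)]
        · apply iSup_le
          intro n
          by_cases hmem : s ∈ Ioo (0:ℝ) ((n:ℝ) + 1)
          · rw [Set.indicator_of_mem hmem]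
          · rw [Set.indicator_of_notMem hmem]; exact zero_le
      · rw [Set.indicator_of_notMem (by simpa using hs)]
        apply le_antisymm
        · exact zero_le
        · apply iSup_le
          intro n
          rw [Set.indicator_of_notMem (fun hmem => hs hmem.1)]
      done
    · exact fun n => hG.indicator measurableSet_Ioo
    · intro n m hnm s
      apply Set.indicator_le_indicator_of_subset
      · exact Ioo_subset_Ioo le_rfl (by push_cast; linarith [(Nat.cast_le (α := ℝ)).mpr hnm])
      · exact fun a => zero_le
  rw [key]
  exact iSup_le fun n => h _ (by positivity)

/-- If the Schrödinger kernel `k_t` is dominated by the heat kernel and satisfies the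
Duhamel perturbation formula, then `∫ V(z) Γ(z,y) dz ≤ 1` where `Γ(z,y) = ∫₀^∞ k_s(z,y) ds`. -/
theorem stmt4 (d : ℕ) (hd : 3 ≤ d)
    (V : EuclideanSpace ℝ (Fin d) → ℝ) (hV : ∀ z, 0 ≤ V z)
    (hVloc : LocallyIntegrable V volume)
    (k : ℝ → EuclideanSpace ℝ (Fin d) → EuclideanSpace ℝ (Fin d) → ℝ≥0∞)
    (hk_meas : Measurable fun p : ℝ × EuclideanSpace ℝ (Fin d) × EuclideanSpace ℝ (Fin d) =>
      k p.1 p.2.1 p.2.2)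
    (hdom : ∀ t, 0 < t → ∀ x y, k t x y ≤ ENNReal.ofReal (heatKernel d t (x - y)))
    (hDuhamel : ∀ t, 0 < t → ∀ x y,
      ENNReal.ofReal (heatKernel d t (x - y)) = k t x y +
        ∫⁻ s in Ioo (0:ℝ) t, ∫⁻ z,
          ENNReal.ofReal (heatKernel d (t - s) (x - z)) * ENNReal.ofReal (V z) * k s z y)
    (y : EuclideanSpace ℝ (Fin d)) :
    ∫⁻ z, ENNReal.ofReal (V z) * ∫⁻ s in Ioi (0:ℝ), k s z y ≤ 1 := by
  classical
  obtain ⟨g, hg_meas, hg_ae⟩ := hVloc.aestronglyMeasurable.aemeasurable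
  have hheat := heatKernel_measurable d
  -- measurability of the kernel with `y` fixed, as a function of `(s, z)`
  have hkm : Measurable fun p : ℝ × EuclideanSpace ℝ (Fin d) => k p.1 p.2 y :=
    hk_meas.comp (measurable_fst.prodMk (measurable_snd.prodMk measurable_const))
  set G : ℝ → ℝ≥0∞ := fun s => ∫⁻ z, ENNReal.ofReal (g z) * k s z y with hGdef
  have hc_meas : Measurable fun p : ℝ × EuclideanSpace ℝ (Fin d) =>
      ENNReal.ofReal (g p.2) * k p.1 p.2 y :=
    (ENNReal.measurable_ofReal.comp (hg_meas.comp measurable_snd)).mul hkm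
  have hG_meas : Measurable G := hc_meas.lintegral_prod_right'
  -- Claim A : for each t > 0, ∫_{(0,t)} G ≤ 1
  have claimA : ∀ t : ℝ, 0 < t → ∫⁻ s in Ioo (0:ℝ) t, G s ≤ 1 := by
    intro t ht
    -- the integrand in the Duhamel double integral, rewritten with `g` and reassociated
    have e1 : ∀ x : EuclideanSpace ℝ (Fin d),
        (∫⁻ s in Ioo (0:ℝ) t, ∫⁻ z, ENNReal.ofReal (heatKernel d (t - s) (x - z)) *
            ENNReal.ofReal (V z) * k s z y)
        = ∫⁻ s in Ioo (0:ℝ) t, ∫⁻ z, ENNReal.ofReal (heatKernel d (t - s) (x - z)) *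
            (ENNReal.ofReal (g z) * k s z y) := by
      intro x
      refine lintegral_congr fun s => lintegral_congr_ae ?_
      filter_upwards [hg_ae] with z hz
      rw [hz, mul_assoc]
    -- key bound from integrating Duhamel over x
    have key : ∫⁻ x, (∫⁻ s in Ioo (0:ℝ) t, ∫⁻ z,
        ENNReal.ofReal (heatKernel d (t - s) (x - z)) *
          (ENNReal.ofReal (g z) * k s z y)) ≤ 1 := by
      calc ∫⁻ x, (∫⁻ s in Ioo (0:ℝ) t, ∫⁻ z,
              ENNReal.ofReal (heatKernel d (t - s) (x - z)) *
                (ENNReal.ofReal (g z) * k s z y))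
          = ∫⁻ x, (∫⁻ s in Ioo (0:ℝ) t, ∫⁻ z,
              ENNReal.ofReal (heatKernel d (t - s) (x - z)) *
                ENNReal.ofReal (V z) * k s z y) := lintegral_congr fun x => (e1 x).symm
        _ ≤ ∫⁻ x, (k t x y + ∫⁻ s in Ioo (0:ℝ) t, ∫⁻ z,
              ENNReal.ofReal (heatKernel d (t - s) (x - z)) *
                ENNReal.ofReal (V z) * k s z y) := lintegral_mono fun x => le_add_self
        _ = ∫⁻ x, ENNReal.ofReal (heatKernel d t (x - y)) :=
            lintegral_congr fun x => (hDuhamel t ht x y).symm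
        _ = 1 := lintegral_heatKernel d ht y
    -- now compute the LHS of `key` by Fubini–Tonelli
    have hF : Measurable fun q : (EuclideanSpace ℝ (Fin d) × ℝ) × EuclideanSpace ℝ (Fin d) =>
        ENNReal.ofReal (heatKernel d (t - q.1.2) (q.1.1 - q.2)) *
          (ENNReal.ofReal (g q.2) * k q.1.2 q.2 y) := by
      apply Measurable.mul
      · exact ENNReal.measurable_ofReal.comp (hheat.comp
          ((measurable_const.sub (measurable_snd.comp measurable_fst)).prodMk
            ((measurable_fst.comp measurable_fst).sub measurable_snd)))
      · exact (ENNReal.measurable_ofReal.comp (hg_meas.comp measurable_snd)).mul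
          (hk_meas.comp ((measurable_snd.comp measurable_fst).prodMk
            (measurable_snd.prodMk measurable_const)))
    have houter : Measurable fun p : EuclideanSpace ℝ (Fin d) × ℝ =>
        ∫⁻ z, ENNReal.ofReal (heatKernel d (t - p.2) (p.1 - z)) *
          (ENNReal.ofReal (g z) * k p.2 z y) := hF.lintegral_prod_right'
    have swap1 : ∫⁻ x, (∫⁻ s in Ioo (0:ℝ) t, ∫⁻ z,
        ENNReal.ofReal (heatKernel d (t - s) (x - z)) * (ENNReal.ofReal (g z) * k s z y))
        = ∫⁻ s in Ioo (0:ℝ) t, ∫⁻ x, ∫⁻ z,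
          ENNReal.ofReal (heatKernel d (t - s) (x - z)) * (ENNReal.ofReal (g z) * k s z y) :=
      lintegral_lintegral_swap houter.aemeasurable
    have inner_eq : ∀ s ∈ Ioo (0:ℝ) t,
        (∫⁻ x, ∫⁻ z, ENNReal.ofReal (heatKernel d (t - s) (x - z)) *
          (ENNReal.ofReal (g z) * k s z y)) = G s := by
      intro s hs
      have hts : 0 < t - s := by linarith [hs.2]
      have hF2 : Measurable fun q : EuclideanSpace ℝ (Fin d) × EuclideanSpace ℝ (Fin d) =>
          ENNReal.ofReal (heatKernel d (t - s) (q.1 - q.2)) *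
            (ENNReal.ofReal (g q.2) * k s q.2 y) := by
        apply Measurable.mul
        · exact ENNReal.measurable_ofReal.comp (hheat.comp
            (measurable_const.prodMk (measurable_fst.sub measurable_snd)))
        · exact (ENNReal.measurable_ofReal.comp (hg_meas.comp measurable_snd)).mul
            (hk_meas.comp (measurable_const.prodMk (measurable_snd.prodMk measurable_const)))
      rw [lintegral_lintegral_swap hF2.aemeasurable]
      refine lintegral_congr fun z => ?_
      have hm : Measurable fun x : EuclideanSpace ℝ (Fin d) =>
          ENNReal.ofReal (heatKernel d (t - s) (x - z)) :=
        ENNReal.measurable_ofReal.comp (hheat.comp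
          (measurable_const.prodMk (measurable_id.sub measurable_const)))
      rw [lintegral_mul_const _ hm, lintegral_heatKernel d hts z, one_mul]
    calc ∫⁻ s in Ioo (0:ℝ) t, G s
        = ∫⁻ s in Ioo (0:ℝ) t, ∫⁻ x, ∫⁻ z,
            ENNReal.ofReal (heatKernel d (t - s) (x - z)) *
              (ENNReal.ofReal (g z) * k s z y) :=
          (setLIntegral_congr_fun measurableSet_Ioo
            (fun s hs => (inner_eq s hs).symm))
      _ = ∫⁻ x, (∫⁻ s in Ioo (0:ℝ) t, ∫⁻ z,
            ENNReal.ofReal (heatKernel d (t - s) (x - z)) *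
              (ENNReal.ofReal (g z) * k s z y)) := swap1.symm
      _ ≤ 1 := key
  -- pass to the limit t → ∞
  have hIoi : ∫⁻ s in Ioi (0:ℝ), G s ≤ 1 := lintegral_Ioi_le_one hG_meas claimA
  -- rewrite the goal
  calc ∫⁻ z, ENNReal.ofReal (V z) * ∫⁻ s in Ioi (0:ℝ), k s z y
      = ∫⁻ z, ENNReal.ofReal (g z) * ∫⁻ s in Ioi (0:ℝ), k s z y := by
        refine lintegral_congr_ae ?_
        filter_upwards [hg_ae] with z hz
        rw [hz]
    _ = ∫⁻ z, ∫⁻ s in Ioi (0:ℝ), ENNReal.ofReal (g z) * k s z y :=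
        lintegral_congr fun z =>
          (lintegral_const_mul' _ _ ENNReal.ofReal_ne_top).symm
    _ = ∫⁻ s in Ioi (0:ℝ), G s := by
        refine lintegral_lintegral_swap ?_
        exact ((ENNReal.measurable_ofReal.comp (hg_meas.comp measurable_fst)).mul
          (hk_meas.comp (measurable_snd.prodMk
            (measurable_fst.prodMk measurable_const)))).aemeasurable
    _ ≤ 1 := hIoi
end

section
/- With v and ε as above (0 < ε < 1 - 2/p, 2 < p < ∞), and u = φ·v where φ ∈ C_c^∞(ℝ^d) equals 1 on the unit ball, the function ∂_{x₁} u satisfies |∂_{x₁} u(x₁,x₂,x')| ≍ |x₁| (x₁² + x₂²)^{ε/2 - 1} near the origin, and consequently ∂_{x₁} u ∉ L^p(ℝ^d). -/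
open MeasureTheory Real Filter

set_option maxHeartbeats 1000000

private lemma sumAux {ε : ℝ} (hε : 0 < ε) {r : ℝ} (hr : 0 ≤ r) :
    Summable (fun m : ℕ => ((m : ℝ) + 1) * r ^ m / (ε ^ (2 * m) * (Nat.factorial m : ℝ) ^ 2)) := by
  apply Summable.of_nonneg_of_le (fun m => by positivity) (fun m => ?_)
    (Real.summable_pow_div_factorial (2 * r / ε ^ 2))
  have h1 : ((m : ℝ) + 1) ≤ 2 ^ m * (Nat.factorial m : ℝ) := by
    have : (m + 1 : ℕ) ≤ 2 ^ m * Nat.factorial m := by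
      calc m + 1 ≤ 2 ^ m := Nat.lt_two_pow_self
        _ ≤ 2 ^ m * Nat.factorial m := Nat.le_mul_of_pos_right _ (Nat.factorial_pos m)
    exact_mod_cast this
  have hfac : (0:ℝ) < (Nat.factorial m : ℝ) := by exact_mod_cast Nat.factorial_pos m
  calc ((m : ℝ) + 1) * r ^ m / (ε ^ (2 * m) * (Nat.factorial m : ℝ) ^ 2)
      ≤ (2 ^ m * (Nat.factorial m : ℝ)) * r ^ m / (ε ^ (2 * m) * (Nat.factorial m : ℝ) ^ 2) := by
        gcongr
    _ = (2 * r / ε ^ 2) ^ m / (Nat.factorial m : ℝ) := by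
        rw [div_pow, mul_pow, ← pow_mul]
        field_simp

lemma coord_le_norm {d : ℕ} (j : Fin d) (z : EuclideanSpace ℝ (Fin d)) : |z j| ≤ ‖z‖ := by
  rw [EuclideanSpace.norm_eq]
  calc |z j| = Real.sqrt (|z j| ^ 2) := by rw [Real.sqrt_sq (abs_nonneg _)]
    _ ≤ Real.sqrt (∑ i, ‖z i‖ ^ 2) := by
        apply Real.sqrt_le_sqrt
        exact Finset.single_le_sum (f := fun i => ‖z i‖ ^ 2) (fun i _ => by positivity)
          (Finset.mem_univ j)

lemma keyA {d : ℕ} (i0 i1 : Fin d) (hne : i0 ≠ i1) {ε : ℝ} (hε : 0 < ε)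
    (x : EuclideanSpace ℝ (Fin d)) (hx : 0 < (x i0) ^ 2 + (x i1) ^ 2) :
    ∃ L : EuclideanSpace ℝ (Fin d) →L[ℝ] ℝ,
      HasFDerivAt (fun y : EuclideanSpace ℝ (Fin d) =>
          ∑' m : ℕ, ((y i0) ^ 2 + (y i1) ^ 2) ^ (ε * (m : ℝ) / 2) /
            (ε ^ (2 * m) * (Nat.factorial m : ℝ) ^ 2)) L x ∧
      L (EuclideanSpace.single i0 1) =
        x i0 * ((x i0) ^ 2 + (x i1) ^ 2) ^ (ε / 2 - 1) *
          ∑' m : ℕ, ε * (m : ℝ) * ((x i0) ^ 2 + (x i1) ^ 2) ^ (ε * ((m : ℝ) - 1) / 2) /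
            (ε ^ (2 * m) * (Nat.factorial m : ℝ) ^ 2) := by
  classical
  set w : EuclideanSpace ℝ (Fin d) → ℝ := fun y => (y i0) ^ 2 + (y i1) ^ 2 with hw
  have hwc : Continuous w := by
    have h0 : Continuous fun y : EuclideanSpace ℝ (Fin d) => y i0 :=
      (EuclideanSpace.proj (𝕜 := ℝ) i0).continuous
    have h1 : Continuous fun y : EuclideanSpace ℝ (Fin d) => y i1 :=
      (EuclideanSpace.proj (𝕜 := ℝ) i1).continuous
    fun_prop
  have hWpos : 0 < w x := hx
  have hopen : IsOpen {y : EuclideanSpace ℝ (Fin d) | w y ∈ Set.Ioo (w x / 2) (3 * w x / 2)} :=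
    isOpen_Ioo.preimage hwc
  have hxmem : x ∈ {y : EuclideanSpace ℝ (Fin d) | w y ∈ Set.Ioo (w x / 2) (3 * w x / 2)} := by
    simp only [Set.mem_setOf_eq, Set.mem_Ioo]
    exact ⟨by linarith, by linarith⟩
  obtain ⟨ρ, hρ, hball⟩ := Metric.isOpen_iff.1 hopen x hxmem
  set A := w x / 2 with hA'
  set B := 3 * w x / 2 with hB'
  have hA : 0 < A := by positivity
  have hB : 0 < B := by positivity
  set r : ℝ := B ^ (ε / 2) with hr
  have hr0 : 0 ≤ r := Real.rpow_nonneg hB.le _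
  set a : ℕ → ℝ := fun m => ε ^ (2 * m) * (Nat.factorial m : ℝ) ^ 2 with ha
  have hapos : ∀ m, 0 < a m := fun m => by
    have : (0:ℝ) < (Nat.factorial m : ℝ) := by exact_mod_cast Nat.factorial_pos m
    simp only [ha]; positivity
  set P0 : EuclideanSpace ℝ (Fin d) →L[ℝ] ℝ := EuclideanSpace.proj (𝕜 := ℝ) i0 with hP0
  set P1 : EuclideanSpace ℝ (Fin d) →L[ℝ] ℝ := EuclideanSpace.proj (𝕜 := ℝ) i1 with hP1
  set Dw : EuclideanSpace ℝ (Fin d) → (EuclideanSpace ℝ (Fin d) →L[ℝ] ℝ) := fun y =>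
    (2 * y i0) • P0 + (2 * y i1) • P1 with hDw
  set f' : ℕ → EuclideanSpace ℝ (Fin d) → (EuclideanSpace ℝ (Fin d) →L[ℝ] ℝ) := fun m y =>
    ((ε * (m : ℝ) / 2) * (w y) ^ (ε * (m : ℝ) / 2 - 1) / a m) • Dw y with hf'def
  set ub : ℕ → ℝ := fun m => (2 * Real.sqrt B / A * ε) * ((m : ℝ) * r ^ m / a m) with hub
  have hs1 : Summable (fun m : ℕ => (m : ℝ) * r ^ m / a m) := by
    apply Summable.of_nonneg_of_le (fun m => by have := hapos m; positivity)
      (fun m => ?_) (sumAux hε hr0)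
    have := hapos m
    gcongr
    linarith
  have hubsum : Summable ub := hs1.mul_left _
  -- projections have norm ≤ 1
  have hproj : ∀ j : Fin d, ‖(EuclideanSpace.proj (𝕜 := ℝ) j :
      EuclideanSpace ℝ (Fin d) →L[ℝ] ℝ)‖ ≤ 1 := by
    intro j
    apply ContinuousLinearMap.opNorm_le_bound _ zero_le_one
    intro z
    rw [one_mul]
    simpa using coord_le_norm j z
  -- derivative of w
  have hwder : ∀ y, HasFDerivAt w (Dw y) y := by
    intro y
    have h0 : HasFDerivAt (fun z : EuclideanSpace ℝ (Fin d) => z i0) P0 y := P0.hasFDerivAt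
    have h1 : HasFDerivAt (fun z : EuclideanSpace ℝ (Fin d) => z i1) P1 y := P1.hasFDerivAt
    have h2 := (h0.mul h0).add (h1.mul h1)
    have hfun : w = fun z => z i0 * z i0 + z i1 * z i1 := by
      funext z
      show z i0 ^ 2 + z i1 ^ 2 = z i0 * z i0 + z i1 * z i1
      ring
    rw [hfun]
    convert h2 using 1
    · rfl
    · rfl
    · rfl
    · rfl
    · rfl
    · rfl
    rw [hDw]
    simp only [two_mul, add_smul]
  have hf : ∀ m : ℕ, ∀ y ∈ Metric.ball x ρ,
      HasFDerivAt (fun z => w z ^ (ε * (m : ℝ) / 2) / a m) (f' m y) y := by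
    intro m y hy
    have hwy : 0 < w y := lt_trans hA (hball hy).1
    have h3 := ((hwder y).rpow_const (p := ε * (m : ℝ) / 2) (Or.inl hwy.ne')).mul_const (a m)⁻¹
    have hfun : (fun z => w z ^ (ε * (m : ℝ) / 2) / a m)
        = fun z => w z ^ (ε * (m : ℝ) / 2) * (a m)⁻¹ := by
      funext z; rw [div_eq_mul_inv]
    rw [hfun]
    convert h3 using 1
    · rfl
    · rfl
    · rfl
    · rfl
    · rfl
    rw [hf'def, smul_smul]
    congr 1
    field_simp
  -- norm bound
  have hf' : ∀ m : ℕ, ∀ y ∈ Metric.ball x ρ, ‖f' m y‖ ≤ ub m := by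
    intro m y hy
    have hwy : 0 < w y := lt_trans hA (hball hy).1
    have hwyA : A ≤ w y := (hball hy).1.le
    have hwyB : w y ≤ B := (hball hy).2.le
    have hy0 : |y i0| ≤ Real.sqrt B := by
      have h4 : (y i0) ^ 2 ≤ B := by
        have : (y i0) ^ 2 ≤ w y := by simp only [hw]; nlinarith [sq_nonneg (y i1)]
        linarith
      calc |y i0| = Real.sqrt ((y i0) ^ 2) := (Real.sqrt_sq_eq_abs _).symm
        _ ≤ Real.sqrt B := Real.sqrt_le_sqrt h4
    have hy1 : |y i1| ≤ Real.sqrt B := by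
      have h4 : (y i1) ^ 2 ≤ B := by
        have : (y i1) ^ 2 ≤ w y := by simp only [hw]; nlinarith [sq_nonneg (y i0)]
        linarith
      calc |y i1| = Real.sqrt ((y i1) ^ 2) := (Real.sqrt_sq_eq_abs _).symm
        _ ≤ Real.sqrt B := Real.sqrt_le_sqrt h4
    have hDnorm : ‖Dw y‖ ≤ 4 * Real.sqrt B := by
      have e0 : ‖(2 * y i0) • P0‖ ≤ |2 * y i0| * ‖P0‖ := by
        have := ContinuousLinearMap.opNorm_smul_le (2 * y i0) P0
        rwa [Real.norm_eq_abs] at this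
      have e1 : ‖(2 * y i1) • P1‖ ≤ |2 * y i1| * ‖P1‖ := by
        have := ContinuousLinearMap.opNorm_smul_le (2 * y i1) P1
        rwa [Real.norm_eq_abs] at this
      calc ‖Dw y‖ ≤ ‖(2 * y i0) • P0‖ + ‖(2 * y i1) • P1‖ := norm_add_le _ _
        _ ≤ |2 * y i0| * ‖P0‖ + |2 * y i1| * ‖P1‖ := add_le_add e0 e1
        _ ≤ |2 * y i0| * 1 + |2 * y i1| * 1 := by gcongr <;> [exact hproj i0; exact hproj i1]
        _ ≤ 4 * Real.sqrt B := by
            rw [abs_mul, abs_mul]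
            simp only [mul_one]
            rw [abs_two]
            nlinarith [abs_nonneg (y i0), abs_nonneg (y i1)]
    have hrm : (w y) ^ (ε * (m : ℝ) / 2) ≤ r ^ m := by
      have h5 : (w y) ^ (ε * (m : ℝ) / 2) ≤ B ^ (ε * (m : ℝ) / 2) :=
        Real.rpow_le_rpow hwy.le hwyB (by positivity)
      have h6 : B ^ (ε * (m : ℝ) / 2) = r ^ m := by
        rw [hr, ← Real.rpow_natCast (B ^ (ε / 2)) m, ← Real.rpow_mul hB.le]
        congr 1
        ring
      linarith
    have hcoef : (ε * (m : ℝ) / 2) * (w y) ^ (ε * (m : ℝ) / 2 - 1) / a m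
        ≤ (ε * (m : ℝ) / 2) * (r ^ m / A) / a m := by
      have h7 : (w y) ^ (ε * (m : ℝ) / 2 - 1) ≤ r ^ m / A := by
        rw [Real.rpow_sub hwy, Real.rpow_one]
        apply div_le_div₀ (by positivity) hrm hA hwyA
      have := hapos m
      have hm0 : (0:ℝ) ≤ ε * (m : ℝ) / 2 := by positivity
      gcongr
    have hcoefnn : 0 ≤ (ε * (m : ℝ) / 2) * (w y) ^ (ε * (m : ℝ) / 2 - 1) / a m := by
      have := hapos m
      have := Real.rpow_nonneg hwy.le (ε * (m : ℝ) / 2 - 1)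
      positivity
    have hns : ‖f' m y‖ ≤ |(ε * (m : ℝ) / 2) * (w y) ^ (ε * (m : ℝ) / 2 - 1) / a m| * ‖Dw y‖ := by
      have := ContinuousLinearMap.opNorm_smul_le
        ((ε * (m : ℝ) / 2) * (w y) ^ (ε * (m : ℝ) / 2 - 1) / a m) (Dw y)
      rw [Real.norm_eq_abs] at this
      exact this
    calc ‖f' m y‖ ≤ ((ε * (m : ℝ) / 2) * (w y) ^ (ε * (m : ℝ) / 2 - 1) / a m) * ‖Dw y‖ := by
          rwa [abs_of_nonneg hcoefnn] at hns
      _ ≤ ((ε * (m : ℝ) / 2) * (r ^ m / A) / a m) * (4 * Real.sqrt B) := by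
          apply mul_le_mul hcoef hDnorm (norm_nonneg _)
          have := hapos m
          positivity
      _ = ub m := by
          rw [hub]
          have := (hapos m).ne'
          field_simp
          ring
  have hf0 : Summable (fun m : ℕ => w x ^ (ε * (m : ℝ) / 2) / a m) := by
    apply Summable.of_nonneg_of_le
      (fun m => by have := hapos m; have := Real.rpow_nonneg hWpos.le (ε * (m:ℝ)/2); positivity)
      (fun m => ?_) (sumAux hε hr0)
    have := hapos m
    have h5 : w x ^ (ε * (m : ℝ) / 2) ≤ r ^ m := by
      have h5a : w x ^ (ε * (m : ℝ) / 2) ≤ B ^ (ε * (m : ℝ) / 2) :=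
        Real.rpow_le_rpow hWpos.le (by rw [hB']; linarith) (by positivity)
      have h6 : B ^ (ε * (m : ℝ) / 2) = r ^ m := by
        rw [hr, ← Real.rpow_natCast (B ^ (ε / 2)) m, ← Real.rpow_mul hB.le]
        congr 1
        ring
      linarith
    calc w x ^ (ε * (m : ℝ) / 2) / a m ≤ r ^ m / a m := by gcongr
      _ ≤ ((m : ℝ) + 1) * r ^ m / a m := by
          rw [div_le_div_iff_of_pos_right (hapos m)]  -- maybe wrong name
          nlinarith [pow_nonneg hr0 m]
  have H := hasFDerivAt_tsum_of_isPreconnected hubsum Metric.isOpen_ball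
    ((convex_ball x ρ).isPreconnected) hf hf' (Metric.mem_ball_self hρ) hf0
    (Metric.mem_ball_self hρ)
  refine ⟨∑' m, f' m x, H, ?_⟩
  have hsum' : Summable (fun m => f' m x) :=
    Summable.of_norm_bounded hubsum (fun m => hf' m x (Metric.mem_ball_self hρ))
  have hev : (∑' m, f' m x) (EuclideanSpace.single i0 (1:ℝ))
      = ∑' m, (f' m x) (EuclideanSpace.single i0 (1:ℝ)) :=
    (ContinuousLinearMap.apply ℝ ℝ (EuclideanSpace.single i0 (1:ℝ))).map_tsum hsum'
  rw [hev]
  have hterm : ∀ m : ℕ, (f' m x) (EuclideanSpace.single i0 (1:ℝ)) =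
      (x i0 * (w x) ^ (ε / 2 - 1)) *
        (ε * (m : ℝ) * (w x) ^ (ε * ((m : ℝ) - 1) / 2) / a m) := by
    intro m
    have hDapp : (Dw x) (EuclideanSpace.single i0 (1:ℝ)) = 2 * x i0 := by
      rw [hDw]
      have e0 : P0 (EuclideanSpace.single i0 (1:ℝ)) = 1 := by
        show (EuclideanSpace.single i0 (1:ℝ)) i0 = 1
        simp
      have e1 : P1 (EuclideanSpace.single i0 (1:ℝ)) = 0 := by
        show (EuclideanSpace.single i0 (1:ℝ)) i1 = 0
        simp [EuclideanSpace.single_apply, Ne.symm hne]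
      simp only [ContinuousLinearMap.add_apply, ContinuousLinearMap.coe_smul', Pi.smul_apply,
        smul_eq_mul, e0, e1]
      ring
    have happ : (f' m x) (EuclideanSpace.single i0 (1:ℝ))
        = ((ε * (m : ℝ) / 2) * (w x) ^ (ε * (m : ℝ) / 2 - 1) / a m) * (2 * x i0) := by
      rw [hf'def]
      rw [ContinuousLinearMap.smul_apply, smul_eq_mul]
      rw [hDapp]
    rw [happ]
    have hsplit : (w x) ^ (ε * (m : ℝ) / 2 - 1)
        = (w x) ^ (ε / 2 - 1) * (w x) ^ (ε * ((m : ℝ) - 1) / 2) := by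
      rw [← Real.rpow_add hWpos]
      congr 1
      ring
    rw [hsplit]
    ring
  rw [tsum_congr hterm, tsum_mul_left]

lemma keyB {d : ℕ} (i0 i1 : Fin d) (hne : i0 ≠ i1) {ε : ℝ} (hε : 0 < ε) (hε1 : ε < 1)
    (x : EuclideanSpace ℝ (Fin d)) (h0 : x i0 = 0) (h1 : x i1 = 0) :
    ¬ DifferentiableAt ℝ (fun y : EuclideanSpace ℝ (Fin d) =>
        ∑' m : ℕ, ((y i0) ^ 2 + (y i1) ^ 2) ^ (ε * (m : ℝ) / 2) /
          (ε ^ (2 * m) * (Nat.factorial m : ℝ) ^ 2)) x := by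
  intro hD
  set V : EuclideanSpace ℝ (Fin d) → ℝ := fun y =>
    ∑' m : ℕ, ((y i0) ^ 2 + (y i1) ^ 2) ^ (ε * (m : ℝ) / 2) /
      (ε ^ (2 * m) * (Nat.factorial m : ℝ) ^ 2) with hV
  set a : ℕ → ℝ := fun m => ε ^ (2 * m) * (Nat.factorial m : ℝ) ^ 2 with ha
  have hapos : ∀ m, 0 < a m := fun m => by
    have : (0:ℝ) < (Nat.factorial m : ℝ) := by exact_mod_cast Nat.factorial_pos m
    simp only [ha]; positivity
  have ha0 : a 0 = 1 := by simp [ha]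
  have ha1 : a 1 = ε ^ 2 := by simp [ha]
  set ψ : ℝ → ℝ := fun t => V (x + t • EuclideanSpace.single i0 (1:ℝ)) with hψ
  have hcoord : ∀ t : ℝ, ψ t = ∑' m : ℕ, ((t:ℝ)^2) ^ (ε * (m:ℝ)/2) / a m := by
    intro t
    have c0 : (x + t • EuclideanSpace.single i0 (1:ℝ)) i0 = t := by
      simp [PiLp.add_apply, PiLp.smul_apply, EuclideanSpace.single_apply, h0]
    have c1 : (x + t • EuclideanSpace.single i0 (1:ℝ)) i1 = 0 := by
      simp [PiLp.add_apply, PiLp.smul_apply, EuclideanSpace.single_apply, Ne.symm hne, h1]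
    rw [hψ]
    show V _ = _
    rw [hV]
    exact tsum_congr (fun m => by rw [c0, c1]; norm_num; rfl)
  -- ψ 0 = 1
  have hψ0 : ψ 0 = 1 := by
    rw [hcoord 0]
    have : ∀ m : ℕ, ((0:ℝ)^2) ^ (ε * (m:ℝ)/2) / a m = if m = 0 then 1 else 0 := by
      intro m
      rcases m with _ | m
      · simp [ha0]
      · rw [if_neg (Nat.succ_ne_zero m)]
        have : ((0:ℝ)^2 : ℝ) = 0 := by norm_num
        rw [this, Real.zero_rpow]
        · simp
        · have : (0:ℝ) < ε * ((m:ℝ)+1) / 2 := by positivity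
          push_cast
          linarith
    rw [tsum_congr this, tsum_ite_eq]
  -- ψ t ≥ 1 + t^ε/ε² for 0 < t < 1
  have hsummand_nonneg : ∀ t : ℝ, ∀ m : ℕ, 0 ≤ ((t:ℝ)^2) ^ (ε * (m:ℝ)/2) / a m := by
    intro t m
    have := (hapos m).le
    have := Real.rpow_nonneg (sq_nonneg t) (ε * (m:ℝ)/2)
    positivity
  have hsum : ∀ t : ℝ, Summable (fun m : ℕ => ((t:ℝ)^2) ^ (ε * (m:ℝ)/2) / a m) := by
    intro t
    have ht2 : (0:ℝ) ≤ t^2 := sq_nonneg t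
    set r : ℝ := (t^2) ^ (ε/2) with hr
    have hr0 : 0 ≤ r := Real.rpow_nonneg ht2 _
    have hbase : Summable (fun m : ℕ => ((m : ℝ) + 1) * r ^ m / a m) := sumAux hε hr0
    apply Summable.of_nonneg_of_le (hsummand_nonneg t) (fun m => ?_) hbase
    have heq : ((t:ℝ)^2) ^ (ε * (m:ℝ)/2) = r ^ m := by
      rw [hr, ← Real.rpow_natCast ((t^2 : ℝ) ^ (ε/2)) m, ← Real.rpow_mul ht2]
      congr 1
      ring
    rw [heq]
    have := hapos m
    have hrm : (0:ℝ) ≤ r ^ m := pow_nonneg hr0 m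
    rw [div_le_div_iff_of_pos_right this]
    nlinarith
  -- lower bound for ψ t
  have hlow : ∀ t : ℝ, t ∈ Set.Ioo (0:ℝ) 1 → 1 + t ^ ε / ε ^ 2 ≤ ψ t := by
    intro t ht
    rw [hcoord t]
    have hs := Summable.sum_le_tsum ({0, 1} : Finset ℕ) (fun m _ => hsummand_nonneg t m) (hsum t)
    have hpair : ∑ m ∈ ({0, 1} : Finset ℕ), ((t:ℝ)^2) ^ (ε * (m:ℝ)/2) / a m
        = 1 + t ^ ε / ε ^ 2 := by
      rw [Finset.sum_pair (by norm_num : (0:ℕ) ≠ 1)]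
      have e0 : ((t:ℝ)^2) ^ (ε * ((0:ℕ):ℝ)/2) / a 0 = 1 := by
        norm_num [ha0]
      have e1 : ((t:ℝ)^2) ^ (ε * ((1:ℕ):ℝ)/2) / a 1 = t ^ ε / ε ^ 2 := by
        rw [ha1]
        congr 1
        rw [← Real.rpow_natCast t 2, ← Real.rpow_mul ht.1.le]
        congr 1
        push_cast
        ring
      rw [e0, e1]
    linarith [hs, hpair.symm ▸ hs]
  -- slope lower bound
  have hslope : ∀ t : ℝ, t ∈ Set.Ioo (0:ℝ) 1 → t ^ (ε - 1) / ε ^ 2 ≤ slope ψ 0 t := by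
    intro t ht
    have ht0 : (0:ℝ) < t := ht.1
    rw [slope_def_field]
    rw [hψ0]
    have h2 : (ψ t - 1) / (t - 0) ≥ (t ^ ε / ε ^ 2) / t := by
      rw [sub_zero]
      have := hlow t ht
      gcongr
      linarith
    have h3 : (t ^ ε / ε ^ 2) / t = t ^ (ε - 1) / ε ^ 2 := by
      rw [Real.rpow_sub ht0, Real.rpow_one, div_div, div_div, mul_comm]
    calc t ^ (ε - 1) / ε ^ 2 = (t ^ ε / ε ^ 2) / t := h3.symm
      _ ≤ (ψ t - 1) / (t - 0) := h2
  -- the slope tends to infinity along 0⁺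
  have hg : Tendsto (fun t : ℝ => t ^ (ε - 1) / ε ^ 2) (nhdsWithin 0 (Set.Ioi 0)) atTop := by
    have h1 : Tendsto (fun t : ℝ => (t⁻¹) ^ (1 - ε)) (nhdsWithin 0 (Set.Ioi 0)) atTop :=
      (tendsto_rpow_atTop (by linarith)).comp tendsto_inv_nhdsGT_zero
    have h2 : Tendsto (fun t : ℝ => t ^ (ε - 1)) (nhdsWithin 0 (Set.Ioi 0)) atTop := by
      apply h1.congr'
      filter_upwards [self_mem_nhdsWithin] with t ht
      have ht0 : (0:ℝ) < t := ht
      rw [Real.inv_rpow ht0.le, ← Real.rpow_neg ht0.le]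
      congr 1
      ring
    exact h2.atTop_div_const (by positivity)
  have hT1 : Tendsto (slope ψ 0) (nhdsWithin 0 (Set.Ioi 0)) atTop := by
    apply tendsto_atTop_mono' _ ?_ hg
    filter_upwards [Ioo_mem_nhdsGT_of_mem (Set.mem_Ico.2 ⟨le_refl (0:ℝ), zero_lt_one⟩)] with t ht
    exact hslope t ht
  -- derivative of ψ at 0 exists, contradiction
  have hpt : x + (0:ℝ) • EuclideanSpace.single i0 (1:ℝ) = x := by simp
  have hcurve : HasDerivAt (fun t : ℝ => x + t • EuclideanSpace.single i0 (1:ℝ))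
      (EuclideanSpace.single i0 (1:ℝ)) 0 := by
    have h := ((hasDerivAt_id (0:ℝ)).smul_const (EuclideanSpace.single i0 (1:ℝ))).const_add x
    simpa using h
  have hF : HasFDerivAt V (fderiv ℝ V x) (x + (0:ℝ) • EuclideanSpace.single i0 (1:ℝ)) := by
    rw [hpt]; exact hD.hasFDerivAt
  have hψder : HasDerivAt ψ (fderiv ℝ V x (EuclideanSpace.single i0 (1:ℝ))) 0 := by
    have h := hF.comp_hasDerivAt 0 hcurve
    simpa [hψ, Function.comp_def] using h
  rw [hasDerivAt_iff_tendsto_slope] at hψder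
  have hT2 : Tendsto (slope ψ 0) (nhdsWithin 0 (Set.Ioi 0))
      (nhds (fderiv ℝ V x (EuclideanSpace.single i0 (1:ℝ)))) :=
    hψder.mono_left (nhdsWithin_mono 0 (fun t ht => ne_of_gt ht))
  exact not_tendsto_nhds_of_tendsto_atTop hT1 _ hT2

/-- With `v` as in Shen's construction, `0 < ε < 1 - 2/p`, `2 < p`, and `u = φ·v` where
`φ ∈ C_c^∞` equals `1` on the unit ball, the derivative `∂_{x₁} u` is comparable to
`|x₁| (x₁²+x₂²)^{ε/2-1}` near the origin, and consequently `∂_{x₁} u ∉ L^p(ℝ^d)`. -/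
theorem stmt13 (d : ℕ) (hd : 3 ≤ d) (p ε : ℝ) (hp : 2 < p) (hε : 0 < ε) (hε' : ε < 1 - 2 / p)
    (v : EuclideanSpace ℝ (Fin d) → ℝ)
    (hv : ∀ x, v x = ∑' m : ℕ,
      ((x ⟨0, by omega⟩) ^ 2 + (x ⟨1, by omega⟩) ^ 2) ^ (ε * (m : ℝ) / 2) /
        (ε ^ (2 * m) * ((Nat.factorial m : ℝ)) ^ 2))
    (φ : EuclideanSpace ℝ (Fin d) → ℝ)
    (hφ : ContDiff ℝ (⊤ : ℕ∞) φ) (hφc : HasCompactSupport φ)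
    (hφ1 : ∀ x : EuclideanSpace ℝ (Fin d), ‖x‖ ≤ 1 → φ x = 1)
    (u : EuclideanSpace ℝ (Fin d) → ℝ) (hu : ∀ x, u x = φ x * v x) :
    (∃ c C δ : ℝ, 0 < c ∧ 0 < C ∧ 0 < δ ∧
      ∀ x : EuclideanSpace ℝ (Fin d), ‖x‖ < δ →
        c * |x ⟨0, by omega⟩| *
            ((x ⟨0, by omega⟩) ^ 2 + (x ⟨1, by omega⟩) ^ 2) ^ (ε / 2 - 1)
          ≤ |fderiv ℝ u x (EuclideanSpace.single ⟨0, by omega⟩ 1)| ∧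
        |fderiv ℝ u x (EuclideanSpace.single ⟨0, by omega⟩ 1)|
          ≤ C * |x ⟨0, by omega⟩| *
              ((x ⟨0, by omega⟩) ^ 2 + (x ⟨1, by omega⟩) ^ 2) ^ (ε / 2 - 1)) ∧
    ¬ MemLp (fun x => fderiv ℝ u x (EuclideanSpace.single ⟨0, by omega⟩ 1))
        (ENNReal.ofReal p) volume := by
  classical
  have hp0 : (0:ℝ) < p := by linarith
  have hε1 : ε < 1 := by
    have h2p : 0 < 2 / p := by positivity
    linarith
  have hi0lt : 0 < d := by omega
  have hi1lt : 1 < d := by omega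
  set i0 : Fin d := ⟨0, by omega⟩ with hi0
  set i1 : Fin d := ⟨1, by omega⟩ with hi1
  have hne : i0 ≠ i1 := by simp [hi0, hi1, Fin.ext_iff]
  set V : EuclideanSpace ℝ (Fin d) → ℝ := fun y =>
    ∑' m : ℕ, ((y i0) ^ 2 + (y i1) ^ 2) ^ (ε * (m : ℝ) / 2) /
      (ε ^ (2 * m) * (Nat.factorial m : ℝ) ^ 2) with hV
  set a : ℕ → ℝ := fun m => ε ^ (2 * m) * (Nat.factorial m : ℝ) ^ 2 with ha
  have hapos : ∀ m, 0 < a m := fun m => by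
    have : (0:ℝ) < (Nat.factorial m : ℝ) := by exact_mod_cast Nat.factorial_pos m
    simp only [ha]; positivity
  have ha1 : a 1 = ε ^ 2 := by simp [ha]
  -- the constant C₀
  have hC0sum : Summable (fun m : ℕ => ε * (m : ℝ) / a m) := by
    apply Summable.of_nonneg_of_le (fun m => by have := (hapos m).le; positivity)
      (fun m => ?_) ((sumAux hε (r := 1) zero_le_one).mul_left (ε + 1))
    have h1 : (1:ℝ) ^ m = 1 := one_pow m
    have := hapos m
    rw [h1]
    rw [div_le_iff₀ this] at *
    have hmn : (0:ℝ) ≤ (m:ℝ) := Nat.cast_nonneg m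
    have expand : (ε + 1) * (((m:ℝ) + 1) * 1 / a m) * a m = (ε + 1) * ((m:ℝ) + 1) := by
      field_simp
    rw [expand]
    nlinarith
  set C₀ : ℝ := ∑' m : ℕ, ε * (m : ℝ) / a m with hC₀
  have hC0low : 1 / ε ≤ C₀ := by
    have h1 : ε * ((1:ℕ) : ℝ) / a 1 = 1 / ε := by
      rw [ha1]; push_cast; field_simp
    calc (1:ℝ) / ε = ε * ((1:ℕ) : ℝ) / a 1 := h1.symm
      _ ≤ C₀ := Summable.le_tsum hC0sum 1 (fun m _ => by
          have := (hapos m).le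
          positivity)
  have hC0pos : 0 < C₀ := lt_of_lt_of_le (by positivity) hC0low
  -- Part A : the two-sided bound
  have key : ∀ x : EuclideanSpace ℝ (Fin d), ‖x‖ < 1/2 →
      (1/ε) * |x i0| * ((x i0) ^ 2 + (x i1) ^ 2) ^ (ε / 2 - 1)
        ≤ |fderiv ℝ u x (EuclideanSpace.single i0 1)| ∧
      |fderiv ℝ u x (EuclideanSpace.single i0 1)|
        ≤ C₀ * |x i0| * ((x i0) ^ 2 + (x i1) ^ 2) ^ (ε / 2 - 1) := by
    intro x hx
    have huV : u =ᶠ[nhds x] V := by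
      have hball : Metric.ball (0 : EuclideanSpace ℝ (Fin d)) 1 ∈ nhds x := by
        apply Metric.isOpen_ball.mem_nhds
        simp only [Metric.mem_ball, dist_zero_right]
        linarith
      filter_upwards [hball] with y hy
      have hy1 : ‖y‖ ≤ 1 := by
        simp only [Metric.mem_ball, dist_zero_right] at hy
        linarith
      rw [hu y, hφ1 y hy1, one_mul, hv y]
    by_cases hwx : 0 < (x i0) ^ 2 + (x i1) ^ 2
    · obtain ⟨L, hL, hLval⟩ := keyA i0 i1 hne hε x hwx
      have hfd : fderiv ℝ u x = L := (hL.congr_of_eventuallyEq huV).fderiv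
      set s : ℝ := (x i0) ^ 2 + (x i1) ^ 2 with hs
      have hs1 : s ≤ 1 := by
        have c0 := coord_le_norm i0 x
        have c1 := coord_le_norm i1 x
        have e0 : (x i0) ^ 2 ≤ ‖x‖ ^ 2 := by
          rw [← sq_abs (x i0)]
          exact pow_le_pow_left₀ (abs_nonneg _) c0 2
        have e1 : (x i1) ^ 2 ≤ ‖x‖ ^ 2 := by
          rw [← sq_abs (x i1)]
          exact pow_le_pow_left₀ (abs_nonneg _) c1 2
        have hn : ‖x‖ ^ 2 ≤ (1/2) ^ 2 := by
          apply pow_le_pow_left₀ (norm_nonneg x) hx.le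
        rw [hs]
        norm_num at hn
        nlinarith
      set G : ℝ := ∑' m : ℕ, ε * (m : ℝ) * s ^ (ε * ((m : ℝ) - 1) / 2) / a m with hG
      -- summability of the G-series
      have hGsum : Summable (fun m : ℕ => ε * (m : ℝ) * s ^ (ε * ((m : ℝ) - 1) / 2) / a m) := by
        set r : ℝ := s ^ (ε / 2) with hr
        have hr0 : 0 ≤ r := Real.rpow_nonneg hwx.le _
        apply Summable.of_nonneg_of_le
          (fun m => by
            have := (hapos m).le
            have := Real.rpow_nonneg hwx.le (ε * ((m:ℝ) - 1) / 2)
            positivity)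
          (fun m => ?_) ((sumAux hε hr0).mul_left (ε * s ^ (-(ε/2)) + 1))
        have hsplit : s ^ (ε * ((m:ℝ) - 1) / 2) = s ^ (-(ε/2)) * r ^ m := by
          rw [hr, ← Real.rpow_natCast (s ^ (ε/2)) m, ← Real.rpow_mul hwx.le,
            ← Real.rpow_add hwx]
          congr 1
          ring
        rw [hsplit]
        have := hapos m
        have hsneg : 0 ≤ s ^ (-(ε/2)) := Real.rpow_nonneg hwx.le _
        have hrm : (0:ℝ) ≤ r ^ m := pow_nonneg hr0 m
        rw [div_le_iff₀ this]
        have expand : (ε * s ^ (-(ε/2)) + 1) * (((m:ℝ) + 1) * r ^ m / a m) * a m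
            = (ε * s ^ (-(ε/2)) + 1) * (((m:ℝ) + 1) * r ^ m) := by
          field_simp
        rw [expand]
        have hmn : (0:ℝ) ≤ (m:ℝ) := Nat.cast_nonneg m
        nlinarith [mul_nonneg (mul_nonneg hε.le hsneg) hrm, mul_nonneg hmn hrm, hrm,
          mul_nonneg (mul_nonneg (mul_nonneg hε.le hsneg) hmn) hrm]
      have hGlow : 1 / ε ≤ G := by
        have h1 : ε * ((1:ℕ) : ℝ) * s ^ (ε * (((1:ℕ):ℝ) - 1) / 2) / a 1 = 1 / ε := by
          rw [ha1]
          push_cast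
          rw [show ε * ((1:ℝ) - 1) / 2 = 0 by ring, Real.rpow_zero]
          field_simp
        calc (1:ℝ) / ε = ε * ((1:ℕ) : ℝ) * s ^ (ε * (((1:ℕ):ℝ) - 1) / 2) / a 1 := h1.symm
          _ ≤ G := Summable.le_tsum hGsum 1 (fun m _ =>
              div_nonneg (mul_nonneg (mul_nonneg hε.le (Nat.cast_nonneg m))
                (Real.rpow_nonneg hwx.le _)) (hapos m).le)
      have hGhigh : G ≤ C₀ := by
        apply Summable.tsum_le_tsum (fun m => ?_) hGsum hC0sum
        rcases m with _ | m
        · simp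
        · have hsle : s ^ (ε * (((m+1:ℕ):ℝ) - 1) / 2) ≤ 1 := by
            apply Real.rpow_le_one hwx.le hs1
            push_cast
            nlinarith [mul_nonneg hε.le (Nat.cast_nonneg m)]
          have := hapos (m+1)
          have hmn : (0:ℝ) ≤ ((m+1:ℕ):ℝ) := Nat.cast_nonneg _
          have hnum : ε * ((m+1:ℕ):ℝ) * s ^ (ε * (((m+1:ℕ):ℝ) - 1) / 2) ≤ ε * ((m+1:ℕ):ℝ) := by
            have := mul_le_mul_of_nonneg_left hsle (mul_nonneg hε.le hmn)
            simpa using this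
          exact div_le_div₀ (by positivity) hnum this le_rfl
      have hGpos : 0 < G := lt_of_lt_of_le (by positivity) hGlow
      have hq : (0:ℝ) ≤ s ^ (ε / 2 - 1) := Real.rpow_nonneg hwx.le _
      have habs : |fderiv ℝ u x (EuclideanSpace.single i0 1)|
          = |x i0| * s ^ (ε / 2 - 1) * G := by
        rw [hfd, hLval]
        rw [abs_mul, abs_mul]
        rw [abs_of_nonneg hq, abs_of_nonneg hGpos.le]
      rw [habs]
      constructor
      · have hfac : 0 ≤ |x i0| * s ^ (ε / 2 - 1) := by positivity
        calc (1/ε) * |x i0| * s ^ (ε / 2 - 1) = |x i0| * s ^ (ε / 2 - 1) * (1/ε) := by ring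
          _ ≤ |x i0| * s ^ (ε / 2 - 1) * G := mul_le_mul_of_nonneg_left hGlow hfac
      · have hfac : 0 ≤ |x i0| * s ^ (ε / 2 - 1) := by positivity
        calc |x i0| * s ^ (ε / 2 - 1) * G ≤ |x i0| * s ^ (ε / 2 - 1) * C₀ :=
              mul_le_mul_of_nonneg_left hGhigh hfac
          _ = C₀ * |x i0| * s ^ (ε / 2 - 1) := by ring
    · -- w x = 0 : both coordinates vanish, fderiv = 0
      have hw0 : (x i0) ^ 2 + (x i1) ^ 2 = 0 := by
        nlinarith [sq_nonneg (x i0), sq_nonneg (x i1)]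
      have h00 : x i0 = 0 := by nlinarith [sq_nonneg (x i0), sq_nonneg (x i1)]
      have h01 : x i1 = 0 := by nlinarith [sq_nonneg (x i0), sq_nonneg (x i1)]
      have hnd : ¬ DifferentiableAt ℝ V x := keyB i0 i1 hne hε hε1 x h00 h01
      have hndu : ¬ DifferentiableAt ℝ u x := by
        intro h
        exact hnd ((huV.differentiableAt_iff).1 h)
      have hfd0 : fderiv ℝ u x = 0 := fderiv_zero_of_not_differentiableAt hndu
      rw [hfd0, h00]
      simp only [ContinuousLinearMap.zero_apply, abs_zero, abs_zero]
      constructor <;> simp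
  refine ⟨⟨1/ε, C₀, 1/2, by positivity, hC0pos, by norm_num, fun x hx => key x hx⟩, ?_⟩
  -- Part C : not in L^p
  intro hMem
  set f : EuclideanSpace ℝ (Fin d) → ℝ :=
    fun x => fderiv ℝ u x (EuclideanSpace.single i0 1) with hf
  have hdR : (3:ℝ) ≤ (d:ℝ) := by exact_mod_cast hd
  set δ' : ℝ := 1 / (2*(d:ℝ)) with hδ'
  have hδ'pos : 0 < δ' := by rw [hδ']; positivity
  set γ : ℝ := (ε - 1)*p + 2 with hγ
  have hγneg : γ < 0 := by
    have h1 := mul_lt_mul_of_pos_right hε' hp0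
    have h2 : (1 - 2/p) * p = p - 2 := by field_simp
    rw [h2] at h1
    rw [hγ]
    nlinarith
  set k : ℕ := ((Finset.univ.erase i0).erase i1).card with hk
  set K : ℝ := (1/ε)^p * (5:ℝ)^((ε/2-1)*p) * (2*δ')^k with hK
  have hKpos : 0 < K := by
    rw [hK]
    have h5 : (0:ℝ) < (5:ℝ)^((ε/2-1)*p) := Real.rpow_pos_of_pos (by norm_num) _
    have he : (0:ℝ) < (1/ε)^p := Real.rpow_pos_of_pos (by positivity) _
    positivity
  have hIbound : ∀ b : ℝ, 0 < b → 2*b ≤ δ' →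
      ENNReal.ofReal (K * b ^ γ) ≤ ∫⁻ x, ((‖f x‖₊ : ENNReal)) ^ p := by
    intro b hb hbδ
    have hbδ' : b < δ' := by linarith
    set J : Fin d → Set ℝ := fun i =>
      if i = i0 then Set.Ioo b (2*b) else if i = i1 then Set.Ioo 0 b else Set.Ioo (-δ') δ'
      with hJ
    have hJ0 : J i0 = Set.Ioo b (2*b) := by rw [hJ]; simp
    have hJ1 : J i1 = Set.Ioo 0 b := by
      rw [hJ]
      simp only [if_neg (Ne.symm hne), if_pos rfl]
      simp
    have hJe : ∀ i : Fin d, i ≠ i0 → i ≠ i1 → J i = Set.Ioo (-δ') δ' := by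
      intro i h1 h2
      rw [hJ]
      simp only [if_neg h1, if_neg h2]
    set S : Set (EuclideanSpace ℝ (Fin d)) :=
      (MeasurableEquiv.toLp 2 (Fin d → ℝ)).symm ⁻¹' (Set.univ.pi J) with hS
    have hJmeas : ∀ i, MeasurableSet (J i) := fun i => by
      simp only [hJ]; split_ifs <;> exact measurableSet_Ioo
    have hSmeas : MeasurableSet S :=
      (MeasurableSet.univ_pi hJmeas).preimage (MeasurableEquiv.toLp 2 (Fin d → ℝ)).symm.measurable
    have hmemS : ∀ x : EuclideanSpace ℝ (Fin d), x ∈ S ↔ ∀ i, x i ∈ J i := by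
      intro x
      rw [hS, Set.mem_preimage, Set.mem_univ_pi]
      exact Iff.rfl
    -- coordinates of points of S
    have hcoords : ∀ x : EuclideanSpace ℝ (Fin d), x ∈ S →
        (b < x i0 ∧ x i0 < 2*b) ∧ (0 < x i1 ∧ x i1 < b) ∧ ‖x‖ < 1/2 := by
      intro x hxS
      have hmem := (hmemS x).1 hxS
      have h0 : x i0 ∈ Set.Ioo b (2*b) := by have := hmem i0; rwa [hJ0] at this
      have h1 : x i1 ∈ Set.Ioo 0 b := by have := hmem i1; rwa [hJ1] at this
      refine ⟨⟨h0.1, h0.2⟩, ⟨h1.1, h1.2⟩, ?_⟩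
      have habs : ∀ i, |x i| < δ' := by
        intro i
        by_cases e0 : i = i0
        · subst e0
          rw [abs_lt]
          constructor
          · linarith [h0.1]
          · linarith [h0.2]
        · by_cases e1 : i = i1
          · subst e1
            rw [abs_lt]
            constructor
            · linarith [h1.1]
            · linarith [h1.2]
          · have := hmem i
            rw [hJe i e0 e1] at this
            rw [abs_lt]
            exact ⟨this.1, this.2⟩
      have hsumlt : ∑ i, ‖x i‖ ^ 2 < 1/4 := by
        have hlt : ∀ i ∈ Finset.univ, ‖x i‖ ^ 2 < δ' ^ 2 := by
          intro i _
          rw [Real.norm_eq_abs]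
          have := habs i
          nlinarith [abs_nonneg (x i)]
        have hne' : (Finset.univ : Finset (Fin d)).Nonempty := ⟨i0, Finset.mem_univ i0⟩
        calc ∑ i, ‖x i‖ ^ 2 < ∑ _i : Fin d, δ' ^ 2 := Finset.sum_lt_sum_of_nonempty hne' hlt
          _ = (d:ℝ) * δ' ^ 2 := by rw [Finset.sum_const, Finset.card_univ, Fintype.card_fin,
                nsmul_eq_mul]
          _ ≤ 1/4 := by
              have hd0 : (0:ℝ) < (d:ℝ) := by linarith
              have heq : (d:ℝ) * (1/(2*(d:ℝ)))^2 = 1/(4*(d:ℝ)) := by field_simp; ring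
              rw [hδ', heq]
              rw [div_le_div_iff₀ (by positivity) (by norm_num)]
              linarith
      rw [EuclideanSpace.norm_eq]
      calc Real.sqrt (∑ i, ‖x i‖ ^ 2) < Real.sqrt (1/4) :=
            Real.sqrt_lt_sqrt (by positivity) hsumlt
        _ = 1/2 := by
            rw [show (1/4:ℝ) = (1/2)^2 by norm_num, Real.sqrt_sq (by norm_num)]
    -- pointwise lower bound on S
    set t : ℝ := (1/ε) * b * (5*b^2) ^ (ε/2 - 1) with ht
    have h5b : (0:ℝ) < 5*b^2 := by positivity
    have htpos : 0 < t := by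
      have := Real.rpow_pos_of_pos h5b (ε/2 - 1)
      rw [ht]; positivity
    have hpoint : ∀ x ∈ S, ENNReal.ofReal (t ^ p) ≤ ((‖f x‖₊ : ENNReal)) ^ p := by
      intro x hxS
      obtain ⟨⟨hb1, hb2⟩, ⟨hc1, hc2⟩, hnorm⟩ := hcoords x hxS
      have hlow := (key x hnorm).1
      have hx0pos : 0 < x i0 := lt_trans hb hb1
      have hwpos : 0 < (x i0)^2 + (x i1)^2 := by nlinarith
      have hwle : (x i0)^2 + (x i1)^2 ≤ 5*b^2 := by nlinarith
      have hrp : (5*b^2) ^ (ε/2-1) ≤ ((x i0)^2 + (x i1)^2) ^ (ε/2-1) :=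
        Real.rpow_le_rpow_of_nonpos hwpos hwle (by linarith)
      have ht_le : t ≤ |f x| := by
        have habs0 : b ≤ |x i0| := le_trans hb1.le (le_abs_self _)
        have step : t ≤ (1/ε) * |x i0| * ((x i0)^2 + (x i1)^2) ^ (ε/2 - 1) := by
          rw [ht]
          have f1 : (1/ε) * b ≤ (1/ε) * |x i0| :=
            mul_le_mul_of_nonneg_left habs0 (by positivity)
          apply mul_le_mul f1 hrp (Real.rpow_nonneg h5b.le _) (by positivity)
        exact le_trans step hlow
      calc ENNReal.ofReal (t ^ p) = ENNReal.ofReal t ^ p :=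
            (ENNReal.ofReal_rpow_of_nonneg htpos.le hp0.le).symm
        _ ≤ ENNReal.ofReal |f x| ^ p := by
            apply ENNReal.rpow_le_rpow _ hp0.le
            exact ENNReal.ofReal_le_ofReal ht_le
        _ = ((‖f x‖₊ : ENNReal)) ^ p := by rw [← Real.enorm_eq_ofReal_abs, enorm_eq_nnnorm]
    -- volume of the box S
    have hvolS : volume S = ENNReal.ofReal (b * (b * (2*δ')^k)) := by
      rw [hS, (EuclideanSpace.volume_preserving_symm_measurableEquiv_toLp (Fin d)).measure_preimage
        (MeasurableSet.univ_pi hJmeas).nullMeasurableSet]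
      rw [volume_pi_pi]
      rw [← Finset.mul_prod_erase Finset.univ _ (Finset.mem_univ i0)]
      rw [← Finset.mul_prod_erase _ _
        (Finset.mem_erase.2 ⟨Ne.symm hne, Finset.mem_univ i1⟩)]
      have hrest : ∀ i ∈ (Finset.univ.erase i0).erase i1,
          volume (J i) = ENNReal.ofReal (2*δ') := by
        intro i hi
        obtain ⟨hi1, hi0'⟩ := Finset.mem_erase.1 hi
        obtain ⟨hi0, _⟩ := Finset.mem_erase.1 hi0'
        rw [hJe i hi0 hi1, Real.volume_Ioo]
        congr 1
        ring
      rw [Finset.prod_congr rfl hrest, Finset.prod_const]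
      rw [hJ0, hJ1, Real.volume_Ioo, Real.volume_Ioo]
      rw [show 2*b - b = b by ring, sub_zero]
      rw [← ENNReal.ofReal_pow (by positivity)]
      rw [← ENNReal.ofReal_mul hb.le, ← ENNReal.ofReal_mul hb.le]
    -- the exponent computation
    have e1 : t ^ p = (1/ε)^p * b^p * ((5*b^2) ^ ((ε/2-1)*p)) := by
      rw [ht]
      rw [Real.mul_rpow (by positivity) (Real.rpow_nonneg h5b.le _)]
      rw [Real.mul_rpow (by positivity) hb.le]
      rw [← Real.rpow_mul h5b.le]
    have e2 : (5*b^2) ^ ((ε/2-1)*p) = (5:ℝ)^((ε/2-1)*p) * b ^ ((ε-2)*p) := by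
      rw [Real.mul_rpow (by norm_num) (by positivity)]
      congr 1
      rw [← Real.rpow_natCast b 2, ← Real.rpow_mul hb.le]
      congr 1
      push_cast
      ring
    have hbsplit : b ^ γ = b^p * b^((ε-2)*p) * (b * b) := by
      calc b ^ γ = b ^ (p + ((ε-2)*p + ((1:ℝ)+1))) := by rw [hγ]; congr 1; ring
        _ = b^p * b^((ε-2)*p + ((1:ℝ)+1)) := Real.rpow_add hb _ _
        _ = b^p * (b^((ε-2)*p) * b^((1:ℝ)+1)) := by rw [Real.rpow_add hb]
        _ = b^p * (b^((ε-2)*p) * (b^(1:ℝ) * b^(1:ℝ))) := by rw [Real.rpow_add hb]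
        _ = b^p * b^((ε-2)*p) * (b * b) := by rw [Real.rpow_one]; ring
    have e3 : K * b ^ γ = t^p * (b * (b * (2*δ')^k)) := by
      rw [e1, e2, hK, hbsplit]
      ring
    calc ENNReal.ofReal (K * b ^ γ)
        = ENNReal.ofReal (t^p * (b * (b * (2*δ')^k))) := by rw [e3]
      _ = ENNReal.ofReal (t^p) * ENNReal.ofReal (b * (b * (2*δ')^k)) :=
          ENNReal.ofReal_mul (Real.rpow_nonneg htpos.le _)
      _ = ENNReal.ofReal (t^p) * volume S := by rw [hvolS]
      _ = ∫⁻ _x in S, ENNReal.ofReal (t^p) ∂volume := (setLIntegral_const S _).symm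
      _ ≤ ∫⁻ x in S, ((‖f x‖₊ : ENNReal)) ^ p ∂volume := setLIntegral_mono' hSmeas hpoint
      _ ≤ ∫⁻ x, ((‖f x‖₊ : ENNReal)) ^ p := setLIntegral_le_lintegral _ _
  -- the integral is infinite
  have hItop : (∫⁻ x, ((‖f x‖₊ : ENNReal)) ^ p) = ⊤ := by
    apply ENNReal.eq_top_of_forall_nnreal_le
    intro r
    set b : ℕ → ℝ := fun n => (1/2:ℝ)^(n+1) with hbdef
    have hbpos : ∀ n, 0 < b n := fun n => by rw [hbdef]; positivity
    have hb2 : ∀ n, b n = (2:ℝ) ^ (-((n:ℝ)+1)) := by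
      intro n
      simp only [hbdef]
      rw [one_div, inv_pow, ← Real.rpow_natCast 2 (n+1),
        ← Real.rpow_neg (by norm_num : (0:ℝ) ≤ 2)]
      congr 1
      push_cast
      ring
    have hTend : Tendsto (fun n : ℕ => K * b n ^ γ) atTop atTop := by
      have hlin : Tendsto (fun n : ℕ => ((n:ℝ)+1) * (-γ * Real.log 2)) atTop atTop := by
        apply Tendsto.atTop_mul_const (mul_pos (neg_pos.2 hγneg) (Real.log_pos one_lt_two))
        exact tendsto_atTop_add_const_right atTop 1 tendsto_natCast_atTop_atTop
      have hexp := Real.tendsto_exp_atTop.comp hlin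
      have heq : ∀ n : ℕ, Real.exp (((n:ℝ)+1) * (-γ * Real.log 2)) = b n ^ γ := by
        intro n
        rw [hb2 n, ← Real.rpow_mul (by norm_num : (0:ℝ) ≤ 2)]
        rw [Real.rpow_def_of_pos (by norm_num : (0:ℝ) < 2)]
        congr 1
        ring
      have hbt : Tendsto (fun n : ℕ => b n ^ γ) atTop atTop := Tendsto.congr heq hexp
      exact hbt.const_mul_atTop hKpos
    have hbtend : Tendsto (fun n : ℕ => 2 * b n) atTop (nhds 0) := by
      have h1 : Tendsto (fun n : ℕ => (1/2:ℝ)^n) atTop (nhds 0) :=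
        tendsto_pow_atTop_nhds_zero_of_lt_one (by norm_num) (by norm_num)
      have h2 : Tendsto (fun n : ℕ => (1/2:ℝ)^(n+1)) atTop (nhds 0) :=
        h1.comp (tendsto_add_atTop_nat 1)
      have h3 := h2.const_mul (2:ℝ)
      simpa [hbdef, one_div] using h3
    have hev2 : ∀ᶠ n : ℕ in atTop, 2 * b n ≤ δ' :=
      (hbtend.eventually_lt_const hδ'pos).mono (fun n hn => hn.le)
    have hev1 := hTend.eventually_ge_atTop (r:ℝ)
    obtain ⟨n, hn1, hn2⟩ := (hev1.and hev2).exists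
    calc (r : ENNReal) = ENNReal.ofReal (r:ℝ) := by rw [ENNReal.ofReal_coe_nnreal]
      _ ≤ ENNReal.ofReal (K * b n ^ γ) := ENNReal.ofReal_le_ofReal hn1
      _ ≤ _ := hIbound (b n) (hbpos n) hn2
  -- contradiction with the finiteness of the L^p norm
  have hsn := hMem.2
  have hpne : (ENNReal.ofReal p) ≠ 0 := by
    simp only [ne_eq, ENNReal.ofReal_eq_zero, not_le]
    linarith
  rw [eLpNorm_eq_lintegral_rpow_enorm_toReal hpne ENNReal.ofReal_ne_top] at hsn
  simp only [enorm_eq_nnnorm] at hsn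
  rw [ENNReal.toReal_ofReal hp0.le] at hsn
  rw [hItop] at hsn
  rw [ENNReal.top_rpow_of_pos (by positivity : (0:ℝ) < 1/p)] at hsn
  exact absurd hsn (by simp)
end

section
/- The potential V(x) = (1+|x|)^{-2} (ln(4+|x|))^{-2} on ℝ^d, d ≥ 3, is Green bounded: sup_{x ∈ ℝ^d} ∫_{ℝ^d} V(y) |x-y|^{2-d} dy < ∞. -/
open MeasureTheory Real Set ENNReal Measure Metric Filter


lemma lint_polar (d : ℕ) (hd : 0 < d) (f : ℝ → ℝ≥0∞) (hf : Measurable f) :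
    ∫⁻ x : EuclideanSpace ℝ (Fin d), f ‖x‖ =
      (volume : Measure (EuclideanSpace ℝ (Fin d))).toSphere univ *
        ∫⁻ r in Ioi (0:ℝ), ENNReal.ofReal (r ^ (d-1)) * f r := by
  haveI : Nonempty (Fin d) := ⟨⟨0, hd⟩⟩
  set E := EuclideanSpace ℝ (Fin d) with hE
  have hdim : Module.finrank ℝ E = d := finrank_euclideanSpace_fin
  haveI : Nontrivial E := Module.nontrivial_of_finrank_pos (R := ℝ) (by rw [hdim]; exact hd)
  set μ : Measure E := volume with hμ
  calc
    ∫⁻ x, f ‖x‖ ∂μ = ∫⁻ x : ({(0:E)}ᶜ : Set E), f ‖x.1‖ ∂(μ.comap (↑)) := by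
      rw [lintegral_subtype_comap (measurableSet_singleton _).compl fun x : E ↦ f (‖x‖),
        restrict_compl_singleton]
    _ = ∫⁻ p : Metric.sphere (0 : E) 1 × Ioi (0 : ℝ), f p.2 ∂μ.toSphere.prod (.volumeIoiPow (Module.finrank ℝ E - 1)) :=
      by simpa using (μ.measurePreserving_homeomorphUnitSphereProd.lintegral_comp_emb
        (Homeomorph.measurableEmbedding _) (fun p => f p.2))
    _ = μ.toSphere univ * ∫⁻ r : Ioi (0:ℝ), f r ∂(Measure.volumeIoiPow (Module.finrank ℝ E - 1)) := by
      have h1 := lintegral_prod (μ := μ.toSphere) (ν := Measure.volumeIoiPow (Module.finrank ℝ E - 1))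
        (fun p => f p.2.1) ((hf.comp (measurable_subtype_coe.comp measurable_snd)).aemeasurable)
      rw [h1]
      simp [lintegral_const, mul_comm]
    _ = μ.toSphere univ * ∫⁻ r in Ioi (0:ℝ), ENNReal.ofReal (r ^ (d-1)) * f r := by
      congr 1
      rw [Measure.volumeIoiPow, hdim]
      rw [lintegral_withDensity_eq_lintegral_mul _
        (by measurability : Measurable (fun r : Ioi (0:ℝ) => ENNReal.ofReal (r.1 ^ (d-1))))
        (show Measurable (fun r : Ioi (0:ℝ) => f r) from hf.comp measurable_subtype_coe)]
      simp only [Pi.mul_apply]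
      exact lintegral_subtype_comap measurableSet_Ioi (fun r => ENNReal.ofReal (r ^ (d-1)) * f r)

lemma log_four_ge_one : (1:ℝ) ≤ Real.log 4 := by
  rw [Real.le_log_iff_exp_le (by norm_num)]
  exact Real.exp_one_lt_d9.le.trans (by norm_num)

lemma h_integrable : IntegrableOn (fun r : ℝ => (4+r)⁻¹ / (Real.log (4+r))^2) (Ioi 1) := by
  have key : ∀ x ∈ Ioi (1:ℝ), HasDerivAt (fun r : ℝ => -(Real.log (4+r))⁻¹)
      ((4+x)⁻¹ / (Real.log (4+x))^2) x := by
    intro x hx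
    have hx0 : (0:ℝ) < 4 + x := by simp at hx; linarith
    have hlog : (0:ℝ) < Real.log (4+x) := Real.log_pos (by simp at hx; linarith)
    have h1 : HasDerivAt (fun r : ℝ => 4 + r) 1 x := (hasDerivAt_id x).const_add 4
    have h2 : HasDerivAt (fun r : ℝ => Real.log (4+r)) ((4+x)⁻¹ * 1) x :=
      (Real.hasDerivAt_log hx0.ne').comp x h1
    have h3 := (h2.inv hlog.ne').neg
    have h4 : HasDerivAt (fun r : ℝ => -(Real.log (4+r))⁻¹)
        (-(-((4 + x)⁻¹ * 1) / Real.log (4 + x) ^ 2)) x := h3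
    convert h4 using 1
    ring
  apply integrableOn_Ioi_deriv_of_nonneg (l := 0) _ key
  · intro x hx
    have hx0 : (0:ℝ) < 4 + x := by simp at hx; linarith
    have hlog : (0:ℝ) < Real.log (4+x) := Real.log_pos (by simp at hx; linarith)
    positivity
  · have h1 : Tendsto (fun r : ℝ => Real.log (4+r)) atTop atTop :=
      Real.tendsto_log_atTop.comp (tendsto_atTop_add_const_left _ 4 tendsto_id)
    have := h1.inv_tendsto_atTop.neg
    simpa using this
  · apply ContinuousAt.continuousWithinAt
    have c1 : ContinuousAt (fun r : ℝ => Real.log (4+r)) 1 :=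
      (Real.continuousAt_log (by norm_num)).comp ((continuous_const.add continuous_id).continuousAt)
    exact (c1.inv₀ (Real.log_pos (by norm_num)).ne').neg

lemma oneD (d : ℕ) (hd : 3 ≤ d) :
    ∫⁻ r in Ioi (0:ℝ), ENNReal.ofReal (r ^ (d-1)) *
      ENNReal.ofReal ((1 + r) ^ (-2 : ℝ) * (Real.log (4 + r)) ^ (-2 : ℝ) * r ^ (2 - (d : ℝ)))
      < ⊤ := by
  have key : ∀ r : ℝ, 0 < r → r ^ (d-1) * r ^ (2 - (d:ℝ)) = r := by
    intro r hr
    rw [← Real.rpow_natCast r (d-1), ← Real.rpow_add hr]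
    rw [show ((d-1:ℕ):ℝ) = (d:ℝ) - 1 by push_cast [Nat.cast_sub (by omega : 1 ≤ d)]; ring]
    norm_num
  have hlog : ∀ r : ℝ, 0 ≤ r → (1:ℝ) ≤ Real.log (4 + r) :=
    fun r hr => log_four_ge_one.trans (Real.log_le_log (by norm_num) (by linarith))
  rw [← Ioc_union_Ioi_eq_Ioi (zero_le_one (α := ℝ)),
    lintegral_union measurableSet_Ioi (Ioc_disjoint_Ioi le_rfl)]
  apply ENNReal.add_lt_top.mpr
  constructor
  · -- On (0,1]
    have hb : ∀ r ∈ Ioc (0:ℝ) 1, ENNReal.ofReal (r ^ (d-1)) *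
        ENNReal.ofReal ((1 + r) ^ (-2 : ℝ) * (Real.log (4 + r)) ^ (-2 : ℝ) * r ^ (2 - (d : ℝ)))
        ≤ 1 := by
      intro r hr
      obtain ⟨hr0, hr1⟩ := hr
      rw [← ENNReal.ofReal_mul (by positivity)]
      rw [show (1:ℝ≥0∞) = ENNReal.ofReal 1 by simp]
      apply ENNReal.ofReal_le_ofReal
      have hrw : r ^ (d-1) * ((1 + r) ^ (-2 : ℝ) * (Real.log (4 + r)) ^ (-2 : ℝ) * r ^ (2 - (d:ℝ)))
          = (r ^ (d-1) * r ^ (2 - (d:ℝ))) * ((1 + r) ^ (-2 : ℝ) * (Real.log (4 + r)) ^ (-2 : ℝ)) := by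
        ring
      rw [hrw, key r hr0]
      have h1 : (1 + r) ^ (-2 : ℝ) ≤ 1 :=
        Real.rpow_le_one_of_one_le_of_nonpos (by linarith) (by norm_num)
      have h2 : (Real.log (4 + r)) ^ (-2 : ℝ) ≤ 1 :=
        Real.rpow_le_one_of_one_le_of_nonpos (hlog r hr0.le) (by norm_num)
      have h1' : (0:ℝ) ≤ (1 + r) ^ (-2 : ℝ) := Real.rpow_nonneg (by linarith) _
      have h2' : (0:ℝ) ≤ (Real.log (4 + r)) ^ (-2 : ℝ) :=
        Real.rpow_nonneg (by linarith [hlog r hr0.le]) _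
      calc r * ((1 + r) ^ (-2 : ℝ) * (Real.log (4 + r)) ^ (-2 : ℝ))
          ≤ 1 * (1 * 1) := by
            apply mul_le_mul hr1 (mul_le_mul h1 h2 h2' zero_le_one) (by positivity) zero_le_one
        _ = 1 := by norm_num
    calc ∫⁻ r in Ioc (0:ℝ) 1, ENNReal.ofReal (r ^ (d-1)) *
          ENNReal.ofReal ((1 + r) ^ (-2 : ℝ) * (Real.log (4 + r)) ^ (-2 : ℝ) * r ^ (2 - (d : ℝ)))
        ≤ ∫⁻ _ in Ioc (0:ℝ) 1, 1 := setLIntegral_mono measurable_const hb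
      _ = volume (Ioc (0:ℝ) 1) := by simp
      _ < ⊤ := by simp
  · -- On (1,∞)
    have hint : IntegrableOn (fun r : ℝ => 4 * ((4+r)⁻¹ / (Real.log (4+r))^2)) (Ioi 1) :=
      h_integrable.const_mul 4
    have hb : ∀ r ∈ Ioi (1:ℝ), ENNReal.ofReal (r ^ (d-1)) *
        ENNReal.ofReal ((1 + r) ^ (-2 : ℝ) * (Real.log (4 + r)) ^ (-2 : ℝ) * r ^ (2 - (d : ℝ)))
        ≤ ENNReal.ofReal (4 * ((4+r)⁻¹ / (Real.log (4+r))^2)) := by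
      intro r hr
      simp only [mem_Ioi] at hr
      have hr0 : (0:ℝ) < r := by linarith
      rw [← ENNReal.ofReal_mul (by positivity)]
      apply ENNReal.ofReal_le_ofReal
      have hlogpos : (0:ℝ) < Real.log (4 + r) := by linarith [hlog r hr0.le]
      have e1 : (1 + r) ^ (-2 : ℝ) = ((1+r)^2)⁻¹ := by
        rw [show ((-2):ℝ) = -((2:ℕ):ℝ) by norm_num, Real.rpow_neg (by linarith),
          Real.rpow_natCast]
      have e2 : (Real.log (4 + r)) ^ (-2 : ℝ) = ((Real.log (4+r))^2)⁻¹ := by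
        rw [show ((-2):ℝ) = -((2:ℕ):ℝ) by norm_num, Real.rpow_neg hlogpos.le,
          Real.rpow_natCast]
      have hrw : r ^ (d-1) * ((1 + r) ^ (-2 : ℝ) * (Real.log (4 + r)) ^ (-2 : ℝ) * r ^ (2 - (d:ℝ)))
          = ((r ^ (d-1) * r ^ (2 - (d:ℝ))) * ((1+r)^2)⁻¹) * ((Real.log (4+r))^2)⁻¹ := by
        rw [e1, e2]; ring
      rw [hrw, key r hr0, show 4 * ((4+r)⁻¹ / (Real.log (4+r))^2)
          = (4 * (4+r)⁻¹) * ((Real.log (4+r))^2)⁻¹ by ring]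
      apply mul_le_mul_of_nonneg_right _ (by positivity)
      rw [show r * ((1+r)^2)⁻¹ = r / (1+r)^2 by ring, show (4:ℝ) * (4+r)⁻¹ = 4 / (4+r) by ring,
        div_le_div_iff₀ (by positivity) (by linarith)]
      nlinarith
    calc ∫⁻ r in Ioi (1:ℝ), ENNReal.ofReal (r ^ (d-1)) *
          ENNReal.ofReal ((1 + r) ^ (-2 : ℝ) * (Real.log (4 + r)) ^ (-2 : ℝ) * r ^ (2 - (d : ℝ)))
        ≤ ∫⁻ r in Ioi (1:ℝ), ENNReal.ofReal (4 * ((4+r)⁻¹ / (Real.log (4+r))^2)) := by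
          apply setLIntegral_mono (ENNReal.measurable_ofReal.comp
            ((((measurable_const.add measurable_id).inv.div
              ((Real.measurable_log.comp (measurable_const.add measurable_id)).pow_const 2)).const_mul 4))) hb
      _ < ⊤ := hint.lintegral_lt_top
/-- The potential `V(x) = (1+|x|)^{-2} (ln(4+|x|))^{-2}` on `ℝ^d`, `d ≥ 3`, is Green
bounded: `sup_x ∫ V(y) |x-y|^{2-d} dy < ∞`. -/
theorem stmt15 (d : ℕ) (hd : 3 ≤ d) :
    ∃ C : ℝ, ∀ x : EuclideanSpace ℝ (Fin d),
      ∫⁻ y : EuclideanSpace ℝ (Fin d),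
        ENNReal.ofReal
          ((1 + ‖y‖) ^ (-2 : ℝ) * (Real.log (4 + ‖y‖)) ^ (-2 : ℝ) * ‖x - y‖ ^ (2 - (d : ℝ)))
      ≤ ENNReal.ofReal C := by
  classical
  set E := EuclideanSpace ℝ (Fin d) with hE
  haveI : Nonempty (Fin d) := ⟨⟨0, by omega⟩⟩
  have hdim : Module.finrank ℝ E = d := finrank_euclideanSpace_fin
  haveI : Nontrivial E := Module.nontrivial_of_finrank_pos (R := ℝ) (by rw [hdim]; omega)
  set f : ℝ → ℝ≥0∞ := fun r => ENNReal.ofReal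
    ((1 + r) ^ (-2 : ℝ) * (Real.log (4 + r)) ^ (-2 : ℝ) * r ^ (2 - (d : ℝ))) with hf_def
  have hf : Measurable f := by
    apply Measurable.ennreal_ofReal
    have hb : Measurable (fun r : ℝ => (Real.log (4 + r)) ^ (-2:ℝ)) :=
      (show Measurable fun t : ℝ => t ^ (-2:ℝ) by fun_prop).comp
        (Real.measurable_log.comp (by fun_prop))
    exact (((show Measurable fun r : ℝ => (1+r) ^ (-2:ℝ) by fun_prop).mul hb).mul
      (show Measurable fun r : ℝ => r ^ (2-(d:ℝ)) by fun_prop))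
  set g : E → ℝ≥0∞ := fun z => f ‖z‖ with hg_def
  have hg : Measurable g := hf.comp measurable_norm
  have hI : ∫⁻ z : E, g z ≠ ⊤ := by
    rw [hg_def]
    rw [lint_polar d (by omega) f hf]
    exact ENNReal.mul_ne_top (measure_ne_top _ _) (oneD d hd).ne
  refine ⟨(2 * ∫⁻ z : E, g z).toReal, fun x => ?_⟩
  have h2I : 2 * ∫⁻ z : E, g z ≠ ⊤ := ENNReal.mul_ne_top (by norm_num) hI
  rw [ENNReal.ofReal_toReal h2I]
  have hae : ∀ᵐ y : E ∂volume, ENNReal.ofReal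
      ((1 + ‖y‖) ^ (-2 : ℝ) * (Real.log (4 + ‖y‖)) ^ (-2 : ℝ) * ‖x - y‖ ^ (2 - (d : ℝ)))
      ≤ g y + g (x - y) := by
    have h0 : ∀ᵐ y : E ∂volume, y ≠ (0:E) := by
      rw [ae_iff]
      simpa using measure_singleton (0:E)
    filter_upwards [h0] with y hy
    have hd2 : (2 : ℝ) - d ≤ 0 := by
      have : (3:ℝ) ≤ (d:ℝ) := by exact_mod_cast hd
      linarith
    have hA0 : (0:ℝ) ≤ (1 + ‖y‖) ^ (-2 : ℝ) := Real.rpow_nonneg (by positivity) _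
    have hlogy : (0:ℝ) < Real.log (4 + ‖y‖) := Real.log_pos (by linarith [norm_nonneg y])
    have hB0 : (0:ℝ) ≤ (Real.log (4 + ‖y‖)) ^ (-2 : ℝ) := Real.rpow_nonneg hlogy.le _
    rcases le_total ‖x - y‖ ‖y‖ with h | h
    · -- bound by g (x - y)
      refine le_trans ?_ (le_add_self)
      apply ENNReal.ofReal_le_ofReal
      have hlogxy : (0:ℝ) < Real.log (4 + ‖x - y‖) :=
        Real.log_pos (by linarith [norm_nonneg (x - y)])
      have hA : (1 + ‖y‖) ^ (-2 : ℝ) ≤ (1 + ‖x - y‖) ^ (-2 : ℝ) :=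
        Real.rpow_le_rpow_of_nonpos (by linarith [norm_nonneg (x-y)]) (by linarith) (by norm_num)
      have hB : (Real.log (4 + ‖y‖)) ^ (-2 : ℝ) ≤ (Real.log (4 + ‖x - y‖)) ^ (-2 : ℝ) :=
        Real.rpow_le_rpow_of_nonpos hlogxy
          (Real.log_le_log (by linarith [norm_nonneg (x-y)]) (by linarith)) (by norm_num)
      have hC0 : (0:ℝ) ≤ ‖x - y‖ ^ (2 - (d:ℝ)) := Real.rpow_nonneg (norm_nonneg _) _
      have hA0' : (0:ℝ) ≤ (1 + ‖x - y‖) ^ (-2 : ℝ) :=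
        Real.rpow_nonneg (by linarith [norm_nonneg (x-y)]) _
      exact mul_le_mul_of_nonneg_right
        (mul_le_mul hA hB hB0 hA0') hC0
    · -- bound by g y
      refine le_trans ?_ (self_le_add_right _ _)
      apply ENNReal.ofReal_le_ofReal
      have hy0 : (0:ℝ) < ‖y‖ := norm_pos_iff.mpr hy
      have hC : ‖x - y‖ ^ (2 - (d:ℝ)) ≤ ‖y‖ ^ (2 - (d:ℝ)) :=
        Real.rpow_le_rpow_of_nonpos hy0 h hd2
      exact mul_le_mul_of_nonneg_left hC (by positivity)
  calc ∫⁻ y : E, ENNReal.ofReal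
        ((1 + ‖y‖) ^ (-2 : ℝ) * (Real.log (4 + ‖y‖)) ^ (-2 : ℝ) * ‖x - y‖ ^ (2 - (d : ℝ)))
      ≤ ∫⁻ y : E, (g y + g (x - y)) := lintegral_mono_ae hae
    _ = (∫⁻ z : E, g z) + ∫⁻ y : E, g (x - y) := lintegral_add_left hg _
    _ = (∫⁻ z : E, g z) + ∫⁻ z : E, g z := by
        congr 1
        have hmp := Measure.measurePreserving_sub_left (volume : Measure E) x
        rw [← lintegral_map hg (show Measurable fun y : E => x - y from measurable_id.const_sub x), hmp.map_eq]
    _ = 2 * ∫⁻ z : E, g z := (two_mul _).symm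
end

section
/- Let d ≥ 3, V(x) = (1+|x|)^{-2}(ln(4+|x|))^{-2}, and assume the kernel Γ̃ of L^{-1/2} satisfies Γ̃(x,y) ≥ c|x-y|^{1-d}. Then with f = χ_{B(0,1)}, one has V^{1/2} L^{-1/2} f(x) ≥ c (1+|x|)^{-1} (ln(4+|x|))^{-1} |x|^{1-d} for |x| > 100, and this function is not integrable at infinity; hence V^{1/2} L^{-1/2} is not bounded on L¹(ℝ^d). -/
open MeasureTheory Real Set ENNReal

/-- For `V(x) = (1+|x|)^{-2}(ln(4+|x|))^{-2}` and `f = χ_{B(0,1)}`: if the kernel `Γ̃` of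
`L^{-1/2}` satisfies `Γ̃(x,y) ≥ c|x-y|^{1-d}`, then
`V^{1/2} L^{-1/2} f(x) ≥ c'' (1+|x|)^{-1} (ln(4+|x|))^{-1} |x|^{1-d}` for `|x| > 100`, and
`V^{1/2} L^{-1/2} f` is not integrable; hence `V^{1/2} L^{-1/2}` is not bounded on `L¹`. -/
theorem stmt16 (d : ℕ) (hd : 3 ≤ d)
    (V : EuclideanSpace ℝ (Fin d) → ℝ)
    (hVdef : ∀ x, V x = (1 + ‖x‖) ^ (-2 : ℝ) * (Real.log (4 + ‖x‖)) ^ (-2 : ℝ))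
    (Γ' : EuclideanSpace ℝ (Fin d) → EuclideanSpace ℝ (Fin d) → ℝ≥0∞)
    (c : ℝ) (hc : 0 < c)
    (hlower : ∀ x y : EuclideanSpace ℝ (Fin d), x ≠ y →
      ENNReal.ofReal (c * ‖x - y‖ ^ (1 - (d : ℝ))) ≤ Γ' x y) :
    (∃ c'' : ℝ, 0 < c'' ∧
      ∀ x : EuclideanSpace ℝ (Fin d), 100 < ‖x‖ →
        ENNReal.ofReal
            (c'' * (1 + ‖x‖)⁻¹ * (Real.log (4 + ‖x‖))⁻¹ * ‖x‖ ^ (1 - (d : ℝ)))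
          ≤ ENNReal.ofReal (V x ^ (1 / 2 : ℝ)) *
              ∫⁻ y in Metric.ball (0 : EuclideanSpace ℝ (Fin d)) 1, Γ' x y) ∧
    ∫⁻ x, ENNReal.ofReal (V x ^ (1 / 2 : ℝ)) *
        ∫⁻ y in Metric.ball (0 : EuclideanSpace ℝ (Fin d)) 1, Γ' x y = ⊤ := by
  have hdR : (3:ℝ) ≤ (d:ℝ) := by exact_mod_cast hd
  have hexp_neg : (1:ℝ) - (d:ℝ) ≤ 0 := by linarith
  haveI : Nontrivial (EuclideanSpace ℝ (Fin d)) := by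
    apply Module.nontrivial_of_finrank_pos (R := ℝ)
    rw [finrank_euclideanSpace_fin]; omega
  set v : ℝ≥0∞ := volume (Metric.ball (0 : EuclideanSpace ℝ (Fin d)) 1) with hv
  have hv0 : v ≠ 0 := (Metric.measure_ball_pos volume 0 one_pos).ne'
  have hvt : v ≠ ⊤ := measure_ball_lt_top.ne
  have hvr : 0 < v.toReal := ENNReal.toReal_pos hv0 hvt
  set c'' : ℝ := c * (2:ℝ) ^ ((1:ℝ) - (d:ℝ)) * v.toReal with hc''def
  have hc'' : 0 < c'' := by
    apply mul_pos (mul_pos hc _) hvr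
    exact Real.rpow_pos_of_pos (by norm_num) _
  -- key pointwise bound
  have key : ∀ x : EuclideanSpace ℝ (Fin d), 100 < ‖x‖ →
      ENNReal.ofReal
          (c'' * (1 + ‖x‖)⁻¹ * (Real.log (4 + ‖x‖))⁻¹ * ‖x‖ ^ (1 - (d : ℝ)))
        ≤ ENNReal.ofReal (V x ^ (1 / 2 : ℝ)) *
            ∫⁻ y in Metric.ball (0 : EuclideanSpace ℝ (Fin d)) 1, Γ' x y := by
    intro x hx
    have hxpos : (0:ℝ) < ‖x‖ := by linarith
    have ha : (0:ℝ) < 1 + ‖x‖ := by linarith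
    have hb : (0:ℝ) < Real.log (4 + ‖x‖) := Real.log_pos (by linarith)
    have hVx : V x ^ (1 / 2 : ℝ) = (1 + ‖x‖)⁻¹ * (Real.log (4 + ‖x‖))⁻¹ := by
      rw [hVdef x,
        Real.mul_rpow (Real.rpow_nonneg ha.le _) (Real.rpow_nonneg hb.le _),
        ← Real.rpow_mul ha.le, ← Real.rpow_mul hb.le]
      norm_num [Real.rpow_neg_one]
    -- inner integral lower bound
    have h1 : ∀ y ∈ Metric.ball (0 : EuclideanSpace ℝ (Fin d)) 1,
        ENNReal.ofReal (c * (2:ℝ) ^ ((1:ℝ) - (d:ℝ)) * ‖x‖ ^ ((1:ℝ) - (d:ℝ))) ≤ Γ' x y := by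
      intro y hy
      have hy1 : ‖y‖ < 1 := by simpa using hy
      have hne : x ≠ y := by
        intro h; rw [h] at hx; linarith
      have hxy0 : (0:ℝ) < ‖x - y‖ := by
        rw [norm_pos_iff]; exact sub_ne_zero_of_ne hne
      have hxy : ‖x - y‖ ≤ 2 * ‖x‖ := by
        calc ‖x - y‖ ≤ ‖x‖ + ‖y‖ := norm_sub_le x y
        _ ≤ 2 * ‖x‖ := by linarith
      have h2 : (2 * ‖x‖) ^ ((1:ℝ) - (d:ℝ)) ≤ ‖x - y‖ ^ ((1:ℝ) - (d:ℝ)) :=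
        Real.rpow_le_rpow_of_nonpos hxy0 hxy hexp_neg
      have h3 : ((2:ℝ) * ‖x‖) ^ ((1:ℝ) - (d:ℝ))
          = (2:ℝ) ^ ((1:ℝ) - (d:ℝ)) * ‖x‖ ^ ((1:ℝ) - (d:ℝ)) :=
        Real.mul_rpow (by norm_num) (norm_nonneg x)
      refine le_trans (ENNReal.ofReal_le_ofReal ?_) (hlower x y hne)
      rw [mul_assoc, ← h3]
      exact mul_le_mul_of_nonneg_left h2 hc.le
    have h4 : ENNReal.ofReal (c * (2:ℝ) ^ ((1:ℝ) - (d:ℝ)) * ‖x‖ ^ ((1:ℝ) - (d:ℝ))) * v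
        ≤ ∫⁻ y in Metric.ball (0 : EuclideanSpace ℝ (Fin d)) 1, Γ' x y := by
      have := setLIntegral_mono' (μ := volume) measurableSet_ball h1
      rwa [setLIntegral_const] at this
    have e1 : ENNReal.ofReal
        (c'' * (1 + ‖x‖)⁻¹ * (Real.log (4 + ‖x‖))⁻¹ * ‖x‖ ^ (1 - (d : ℝ)))
        = ENNReal.ofReal (V x ^ (1 / 2 : ℝ)) *
          (ENNReal.ofReal (c * (2:ℝ) ^ ((1:ℝ) - (d:ℝ)) * ‖x‖ ^ ((1:ℝ) - (d:ℝ))) * v) := by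
      rw [hVx, ← ENNReal.ofReal_toReal hvt, ← ENNReal.ofReal_mul (by positivity),
        ← ENNReal.ofReal_mul (by positivity)]
      congr 1
      rw [hc''def]; ring
    rw [e1]
    exact mul_le_mul_right h4 _
  refine ⟨⟨c'', hc'', key⟩, ?_⟩
  -- Part 2: divergence
  rw [← top_le_iff]
  set S : Set (EuclideanSpace ℝ (Fin d)) := {x | 100 < ‖x‖} with hSdef
  have hS : MeasurableSet S := (isOpen_lt continuous_const continuous_norm).measurableSet
  set h : EuclideanSpace ℝ (Fin d) → ℝ≥0∞ := fun x => ENNReal.ofReal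
      (c'' * (1 + ‖x‖)⁻¹ * (Real.log (4 + ‖x‖))⁻¹ * ‖x‖ ^ (1 - (d : ℝ))) with hhdef
  set R : ℕ → ℝ := fun n => Real.exp ((n:ℝ) + 5) with hRdef
  have hRpos : ∀ n, 0 < R n := fun n => Real.exp_pos _
  have hR1 : ∀ n, 1 ≤ R n := fun n => Real.one_le_exp (by positivity)
  have hRmono : StrictMono R := by
    intro m n hmn
    simp only [hRdef]
    have : (m:ℝ) < n := by exact_mod_cast hmn
    exact Real.exp_lt_exp.mpr (by linarith)
  have hR100 : ∀ n, 100 < R n := by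
    intro n
    have h5 : (100:ℝ) < Real.exp 5 := by
      have h := Real.exp_one_gt_d9
      have h2 : (2.7182818283:ℝ) ^ 5 ≤ Real.exp 1 ^ 5 := pow_le_pow_left₀ (by norm_num) h.le 5
      have h3 : Real.exp 1 ^ 5 = Real.exp 5 := by rw [Real.exp_one_pow]; norm_num
      nlinarith
    have h6 : Real.exp 5 ≤ R n := by
      apply Real.exp_le_exp.mpr
      have : (0:ℝ) ≤ (n:ℝ) := Nat.cast_nonneg n
      linarith
    linarith
  set A : ℕ → Set (EuclideanSpace ℝ (Fin d)) :=
    fun n => Metric.ball 0 (R (n+1)) \ Metric.ball 0 (R n) with hAdef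
  have hA_meas : ∀ n, MeasurableSet (A n) :=
    fun n => measurableSet_ball.diff measurableSet_ball
  have hmemA : ∀ (n : ℕ) (x : EuclideanSpace ℝ (Fin d)),
      x ∈ A n ↔ (R n ≤ ‖x‖ ∧ ‖x‖ < R (n+1)) := by
    intro n x
    simp only [hAdef, Set.mem_diff, Metric.mem_ball, dist_zero_right, not_lt]
    tauto
  have hA_sub : ∀ n, A n ⊆ S := by
    intro n x hx
    have h1 := ((hmemA n x).mp hx).1
    have h2 := hR100 n
    simp only [hSdef, Set.mem_setOf_eq]; linarith
  have hA_disj : Pairwise (Function.onFun Disjoint A) := by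
    apply (pairwise_disjoint_on A).mpr
    intro m n hmn
    rw [Set.disjoint_left]
    intro x hxm hxn
    have h1 := ((hmemA m x).mp hxm).2
    have h2 := ((hmemA n x).mp hxn).1
    have h3 : R (m+1) ≤ R n := hRmono.monotone (by omega)
    linarith
  -- volume lower bound for annuli
  have hvol : ∀ n : ℕ, ENNReal.ofReal (R (n+1) ^ d - R n ^ d) * v ≤ volume (A n) := by
    intro n
    have hsub : Metric.ball (0 : EuclideanSpace ℝ (Fin d)) (R n) ⊆ Metric.ball 0 (R (n+1)) :=
      Metric.ball_subset_ball (hRmono (by omega)).le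
    have hdiff : volume (A n)
        = volume (Metric.ball (0 : EuclideanSpace ℝ (Fin d)) (R (n+1)))
          - volume (Metric.ball (0 : EuclideanSpace ℝ (Fin d)) (R n)) :=
      measure_diff hsub measurableSet_ball.nullMeasurableSet measure_ball_lt_top.ne
    have hpow : R n ^ d ≤ R (n+1) ^ d :=
      pow_le_pow_left₀ (hRpos n).le (hRmono (by omega)).le d
    rw [hdiff, Measure.addHaar_ball _ _ (hRpos (n+1)).le,
      Measure.addHaar_ball _ _ (hRpos n).le, finrank_euclideanSpace_fin]
    apply ENNReal.le_sub_of_add_le_right (ENNReal.mul_ne_top ENNReal.ofReal_ne_top hvt)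
    rw [← add_mul, ← ENNReal.ofReal_add (by linarith) (by positivity), sub_add_cancel]
  -- pointwise bound on annuli
  have hq : ∀ n : ℕ, (0:ℝ) < ((n:ℝ) + 7)⁻¹ := fun n => by positivity
  have hpt : ∀ n : ℕ, ∀ x ∈ A n,
      ENNReal.ofReal (c'' * (1 + R (n+1))⁻¹ * ((n:ℝ) + 7)⁻¹ * R (n+1) ^ ((1:ℝ) - (d:ℝ)))
        ≤ h x := by
    intro n x hx
    obtain ⟨hxl, hxu⟩ := (hmemA n x).mp hx
    have hxpos : (0:ℝ) < ‖x‖ := lt_of_lt_of_le (hRpos n) hxl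
    apply ENNReal.ofReal_le_ofReal
    have f1 : (1 + R (n+1))⁻¹ ≤ (1 + ‖x‖)⁻¹ := by
      apply inv_anti₀ (by linarith) (by linarith)
    have hlogpos : (0:ℝ) < Real.log (4 + ‖x‖) := Real.log_pos (by
      have := hR100 n; linarith)
    have f2 : ((n:ℝ) + 7)⁻¹ ≤ (Real.log (4 + ‖x‖))⁻¹ := by
      apply inv_anti₀ hlogpos
      rw [Real.log_le_iff_le_exp (by positivity)]
      have e1 : Real.exp ((n:ℝ) + 7) = Real.exp 1 * R (n+1) := by
        simp only [hRdef, ← Real.exp_add]; push_cast; ring_nf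
      have e2 : (2:ℝ) ≤ Real.exp 1 := by
        have := Real.exp_one_gt_d9; linarith
      have e3 : (4:ℝ) ≤ R (n+1) := by have := hR100 (n+1); linarith
      have e4 : ‖x‖ ≤ R (n+1) := hxu.le
      nlinarith
    have f3 : R (n+1) ^ ((1:ℝ) - (d:ℝ)) ≤ ‖x‖ ^ ((1:ℝ) - (d:ℝ)) :=
      Real.rpow_le_rpow_of_nonpos hxpos hxu.le hexp_neg
    have hx1 : 0 ≤ (1 + ‖x‖)⁻¹ := by positivity
    have hx2 : 0 ≤ (Real.log (4 + ‖x‖))⁻¹ := by positivity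
    have hx3 : 0 ≤ R (n+1) ^ ((1:ℝ) - (d:ℝ)) := Real.rpow_nonneg (hRpos _).le _
    calc c'' * (1 + R (n+1))⁻¹ * ((n:ℝ) + 7)⁻¹ * R (n+1) ^ ((1:ℝ) - (d:ℝ))
        ≤ c'' * (1 + ‖x‖)⁻¹ * (Real.log (4 + ‖x‖))⁻¹ * R (n+1) ^ ((1:ℝ) - (d:ℝ)) := by
          apply mul_le_mul_of_nonneg_right _ hx3
          apply mul_le_mul (mul_le_mul_of_nonneg_left f1 hc''.le) f2 (hq n).le (by positivity)
      _ ≤ c'' * (1 + ‖x‖)⁻¹ * (Real.log (4 + ‖x‖))⁻¹ * ‖x‖ ^ ((1:ℝ) - (d:ℝ)) := by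
          apply mul_le_mul_of_nonneg_left f3 (by positivity)
  -- real inequality per annulus
  have hreal : ∀ n : ℕ, c'' / 4 * ((n:ℝ) + 7)⁻¹
      ≤ c'' * (1 + R (n+1))⁻¹ * ((n:ℝ) + 7)⁻¹ * R (n+1) ^ ((1:ℝ) - (d:ℝ))
        * (R (n+1) ^ d - R n ^ d) := by
    intro n
    have hE₀ : 0 < R n := hRpos n
    have hE₁ : 0 < R (n+1) := hRpos (n+1)
    have hE₁1 : 1 ≤ R (n+1) := hR1 (n+1)
    have hEpow : R (n+1) ^ ((1:ℝ) - (d:ℝ)) = R (n+1) / R (n+1) ^ d := by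
      rw [Real.rpow_sub hE₁, Real.rpow_one, Real.rpow_natCast]
    have h2u : 2 * R n ^ d ≤ R (n+1) ^ d := by
      have he : R (n+1) = Real.exp 1 * R n := by
        simp only [hRdef, ← Real.exp_add]; push_cast; ring_nf
      have e2 : (2:ℝ) ≤ Real.exp 1 := by have := Real.exp_one_gt_d9; linarith
      have e5 : (2:ℝ) ^ d ≤ Real.exp 1 ^ d := pow_le_pow_left₀ (by norm_num) e2 d
      have h2d : (2:ℝ) ≤ 2 ^ d := by
        calc (2:ℝ) = 2 ^ 1 := (pow_one 2).symm
        _ ≤ 2 ^ d := pow_le_pow_right₀ (by norm_num) (by omega)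
      have hE0d : (0:ℝ) < R n ^ d := by positivity
      calc 2 * R n ^ d ≤ Real.exp 1 ^ d * R n ^ d := by nlinarith
      _ = R (n+1) ^ d := by rw [he, mul_pow]
    have hw : (0:ℝ) < R (n+1) ^ d := by positivity
    have key4 : (1:ℝ)/4 ≤ (1 + R (n+1))⁻¹ * (R (n+1) / R (n+1) ^ d)
        * (R (n+1) ^ d - R n ^ d) := by
      rw [inv_eq_one_div, div_mul_div_comm, one_mul, div_mul_eq_mul_div,
        div_le_div_iff₀ (by norm_num) (by positivity)]
      nlinarith [mul_nonneg (sub_nonneg.mpr hE₁1) hw.le,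
        mul_nonneg hE₁.le (sub_nonneg.mpr h2u)]
    have hcq : (0:ℝ) ≤ c'' * ((n:ℝ) + 7)⁻¹ := by positivity
    have h7 := mul_le_mul_of_nonneg_left key4 hcq
    calc c'' / 4 * ((n:ℝ) + 7)⁻¹ = c'' * ((n:ℝ) + 7)⁻¹ * (1/4) := by ring
      _ ≤ c'' * ((n:ℝ) + 7)⁻¹ * ((1 + R (n+1))⁻¹ * (R (n+1) / R (n+1) ^ d)
            * (R (n+1) ^ d - R n ^ d)) := h7
      _ = c'' * (1 + R (n+1))⁻¹ * ((n:ℝ) + 7)⁻¹ * (R (n+1) / R (n+1) ^ d)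
            * (R (n+1) ^ d - R n ^ d) := by ring
      _ = c'' * (1 + R (n+1))⁻¹ * ((n:ℝ) + 7)⁻¹ * R (n+1) ^ ((1:ℝ) - (d:ℝ))
            * (R (n+1) ^ d - R n ^ d) := by rw [hEpow]
  -- per-annulus integral bound
  have hint : ∀ n : ℕ,
      ENNReal.ofReal (c'' / 4 * ((n:ℝ) + 7)⁻¹) * v ≤ ∫⁻ x in A n, h x := by
    intro n
    have hKnn : 0 ≤ c'' * (1 + R (n+1))⁻¹ * ((n:ℝ) + 7)⁻¹ * R (n+1) ^ ((1:ℝ) - (d:ℝ)) := by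
      have := Real.rpow_nonneg (hRpos (n+1)).le ((1:ℝ) - (d:ℝ))
      positivity
    calc ENNReal.ofReal (c'' / 4 * ((n:ℝ) + 7)⁻¹) * v
        ≤ ENNReal.ofReal ((c'' * (1 + R (n+1))⁻¹ * ((n:ℝ) + 7)⁻¹
            * R (n+1) ^ ((1:ℝ) - (d:ℝ))) * (R (n+1) ^ d - R n ^ d)) * v :=
          mul_le_mul_left (ENNReal.ofReal_le_ofReal (hreal n)) v
      _ = ENNReal.ofReal (c'' * (1 + R (n+1))⁻¹ * ((n:ℝ) + 7)⁻¹
            * R (n+1) ^ ((1:ℝ) - (d:ℝ))) * (ENNReal.ofReal (R (n+1) ^ d - R n ^ d) * v) := by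
          rw [ENNReal.ofReal_mul hKnn, mul_assoc]
      _ ≤ ENNReal.ofReal (c'' * (1 + R (n+1))⁻¹ * ((n:ℝ) + 7)⁻¹
            * R (n+1) ^ ((1:ℝ) - (d:ℝ))) * volume (A n) := mul_le_mul_right (hvol n) _
      _ = ∫⁻ _ in A n, ENNReal.ofReal (c'' * (1 + R (n+1))⁻¹ * ((n:ℝ) + 7)⁻¹
            * R (n+1) ^ ((1:ℝ) - (d:ℝ))) := (setLIntegral_const _ _).symm
      _ ≤ ∫⁻ x in A n, h x := setLIntegral_mono' (hA_meas n) (hpt n)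
  -- divergence of the sum
  have htop : ∑' n : ℕ, ENNReal.ofReal (c'' / 4 * ((n:ℝ) + 7)⁻¹) * v = ⊤ := by
    rw [ENNReal.tsum_mul_right]
    have h1 : ∑' n : ℕ, ENNReal.ofReal (c'' / 4 * ((n:ℝ) + 7)⁻¹) = ⊤ := by
      by_contra hne
      have hs := ENNReal.summable_toReal hne
      have hs' : Summable (fun n : ℕ => c'' / 4 * ((n:ℝ) + 7)⁻¹) := by
        apply hs.congr
        intro n
        rw [ENNReal.toReal_ofReal (by positivity)]
      have hs2 : Summable (fun n : ℕ => ((n:ℝ) + 7)⁻¹) := by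
        have h2 := hs'.mul_left (4 / c'')
        apply h2.congr
        intro n
        field_simp
      have hs3 : Summable (fun n : ℕ => (((n + 7 : ℕ)):ℝ)⁻¹) := by
        apply hs2.congr
        intro n
        push_cast
        ring
      exact Real.not_summable_natCast_inv ((summable_nat_add_iff 7).mp hs3)
    rw [h1, ENNReal.top_mul hv0]
  -- conclusion
  calc (⊤:ℝ≥0∞) = ∑' n : ℕ, ENNReal.ofReal (c'' / 4 * ((n:ℝ) + 7)⁻¹) * v := htop.symm
    _ ≤ ∑' n : ℕ, ∫⁻ x in A n, h x := ENNReal.tsum_le_tsum hint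
    _ = ∫⁻ x in ⋃ n, A n, h x := by
        rw [Measure.restrict_iUnion hA_disj hA_meas, lintegral_sum_measure]
    _ ≤ ∫⁻ x in S, h x :=
        lintegral_mono' (Measure.restrict_mono (Set.iUnion_subset hA_sub) le_rfl) le_rfl
    _ ≤ ∫⁻ x in S, ENNReal.ofReal (V x ^ (1 / 2 : ℝ)) *
          ∫⁻ y in Metric.ball (0 : EuclideanSpace ℝ (Fin d)) 1, Γ' x y :=
        setLIntegral_mono' hS (fun x hx => key x hx)
    _ ≤ ∫⁻ x, ENNReal.ofReal (V x ^ (1 / 2 : ℝ)) *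
          ∫⁻ y in Metric.ball (0 : EuclideanSpace ℝ (Fin d)) 1, Γ' x y :=
        setLIntegral_le_lintegral _ _
end
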